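/- arXiv:1710.08884 — 3 statements merged into one kernel-verified Lean document; each statement's English description precedes it below -/
import Mathlib

section
/- Let d ≥ 1, k ∈ {1,…,d}, ρ ∈ ℝ, λ ∈ (0,∞), r ∈ (0,∞), and define V(t,x) = exp(−λ|x^k − ρ|²/(r² − t)) for t < r² and x ∈ ℝ^d, where x^k is the k-th coordinate of x. Let a ∈ 𝕊 satisfy 0 ≤ a^{kk} ≤ 1/(4λ). Then for every t < r² and every x ∈ ℝ^d, ∂_t V(t,x) + Σ_{i,j} a^{ij} D_{ij} V(t,x) ≤ 0. -/
open Set MeasureTheory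

noncomputable section

namespace Krylov

attribute [local instance] Matrix.normedAddCommGroup Matrix.normedSpace

abbrev ES (d : ℕ) : Type := EuclideanSpace ℝ (Fin d)

/-- The parabolic cylinder `C_R = [0, R²) × B_R`. -/
def cyl (d : ℕ) (R : ℝ) : Set (ℝ × ES d) :=
  {q | q.1 ∈ Set.Ico (0 : ℝ) (R ^ 2) ∧ ‖q.2‖ < R}

/-- The shifted parabolic cylinder `C_R(t,x) = (t,x) + C_R`. -/
def cylAt {d : ℕ} (z : ℝ × ES d) (R : ℝ) : Set (ℝ × ES d) :=
  {q | q.1 - z.1 ∈ Set.Ico (0 : ℝ) (R ^ 2) ∧ ‖q.2 - z.2‖ < R}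

/-- Parabolic boundary of a set: closure minus the set itself. -/
def pbd {d : ℕ} (Q : Set (ℝ × ES d)) : Set (ℝ × ES d) := closure Q \ Q

/-- Spatial gradient, as a continuous linear functional. -/
def Dsp {d : ℕ} (φ : ℝ × ES d → ℝ) (q : ℝ × ES d) : ES d →L[ℝ] ℝ :=
  fderiv ℝ (fun y => φ (q.1, y)) q.2

/-- Spatial gradient, as a vector of `ES d`. -/
def gradv {d : ℕ} (φ : ℝ × ES d → ℝ) (q : ℝ × ES d) : ES d :=
  (EuclideanSpace.equiv (Fin d) ℝ).symm fun i => Dsp φ q (EuclideanSpace.single i (1 : ℝ))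

/-- Time derivative `∂_t φ`. -/
def ptd {d : ℕ} (φ : ℝ × ES d → ℝ) (q : ℝ × ES d) : ℝ :=
  deriv (fun s => φ (s, q.2)) q.1

/-- Spatial Hessian `D²φ` as a matrix. -/
def Hess {d : ℕ} (φ : ℝ × ES d → ℝ) (q : ℝ × ES d) : Matrix (Fin d) (Fin d) ℝ :=
  fun i j => fderiv ℝ (fun y => Dsp φ (q.1, y) (EuclideanSpace.single i (1 : ℝ))) q.2
    (EuclideanSpace.single j (1 : ℝ))

/-- Third order spatial derivatives. -/
def D3 {d : ℕ} (φ : ℝ × ES d → ℝ) (q : ℝ × ES d) (i j k : Fin d) : ℝ :=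
  fderiv ℝ (fun y => Hess φ (q.1, y) i j) q.2 (EuclideanSpace.single k (1 : ℝ))

/-- Spatial derivatives of the time derivative. -/
def Dptd {d : ℕ} (φ : ℝ × ES d → ℝ) (q : ℝ × ES d) (i : Fin d) : ℝ :=
  fderiv ℝ (fun y => ptd φ (q.1, y)) q.2 (EuclideanSpace.single i (1 : ℝ))

/-- Operator norm of a `d×d` matrix, via Euclidean spaces. -/
def opn {d : ℕ} (a : Matrix (Fin d) (Fin d) ℝ) : ℝ :=
  ‖LinearMap.toContinuousLinearMap (Matrix.toEuclideanLin a)‖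

/-- The quadratic form of a matrix. -/
def qf {d : ℕ} (a : Matrix (Fin d) (Fin d) ℝ) (l : ES d) : ℝ :=
  ∑ i, ∑ j, a i j * l i * l j

/-- The class `𝕊_δ` of symmetric matrices with quadratic form between `δ|l|²` and `δ⁻¹|l|²`. -/
def Sdelta (d : ℕ) (δ : ℝ) : Set (Matrix (Fin d) (Fin d) ℝ) :=
  {a | a.IsSymm ∧ ∀ l : ES d, δ * ‖l‖ ^ 2 ≤ qf a l ∧ qf a l ≤ δ⁻¹ * ‖l‖ ^ 2}

/-- `trace (a · D²φ) = ∑ aᵢⱼ Dᵢⱼφ`. -/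
def aHess {d : ℕ} (a : Matrix (Fin d) (Fin d) ℝ) (φ : ℝ × ES d → ℝ) (q : ℝ × ES d) : ℝ :=
  ∑ i, ∑ j, a i j * Hess φ q i j

/-- `φ ∈ C^{1,2}(Q)`: `∂_tφ, Dφ, D²φ` exist and are continuous in `Q`. -/
def IsC12 {d : ℕ} (Q : Set (ℝ × ES d)) (φ : ℝ × ES d → ℝ) : Prop :=
  (∀ q ∈ Q, DifferentiableAt ℝ (fun s => φ (s, q.2)) q.1) ∧
  ContinuousOn (ptd φ) Q ∧
  (∀ q ∈ Q, DifferentiableAt ℝ (fun y => φ (q.1, y)) q.2) ∧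
  ContinuousOn (Dsp φ) Q ∧
  (∀ q ∈ Q, ∀ i : Fin d,
    DifferentiableAt ℝ (fun y => Dsp φ (q.1, y) (EuclideanSpace.single i (1 : ℝ))) q.2) ∧
  ContinuousOn (Hess φ) Q

/-- `[φ]_{C^κ(Q)} ≤ M` for `κ ∈ (1,2]`. -/
def HSemiLE {d : ℕ} (κ : ℝ) (Q : Set (ℝ × ES d)) (φ : ℝ × ES d → ℝ) (M : ℝ) : Prop :=
  (∀ (t s : ℝ) (x : ES d), (t, x) ∈ Q → (s, x) ∈ Q →
    |φ (t, x) - φ (s, x)| ≤ M * |t - s| ^ (κ / 2)) ∧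
  (∀ (t : ℝ) (x y : ES d), (t, x) ∈ Q → (t, y) ∈ Q →
    ‖Dsp φ (t, x) - Dsp φ (t, y)‖ ≤ M * ‖x - y‖ ^ (κ - 1))

/-- `[φ]_{C^κ(Q)} ≤ M` for `κ ∈ (0,1]`. -/
def HSemiLE0 {d : ℕ} (κ : ℝ) (Q : Set (ℝ × ES d)) (φ : ℝ × ES d → ℝ) (M : ℝ) : Prop :=
  ∀ p ∈ Q, ∀ q ∈ Q,
    |φ p - φ q| ≤ M * (|p.1 - q.1| ^ (κ / 2) + ‖p.2 - q.2‖ ^ κ)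

/-- `[φ]_{C^κ(Q)} ≤ M` for general `κ ∈ (0,2]`. -/
def HSemiLEg {d : ℕ} (κ : ℝ) (Q : Set (ℝ × ES d)) (φ : ℝ × ES d → ℝ) (M : ℝ) : Prop :=
  if κ ≤ 1 then HSemiLE0 κ Q φ M else HSemiLE κ Q φ M

/-- Membership in `C^κ(Q)` for `κ ∈ (1,2]`. -/
def MemCk {d : ℕ} (κ : ℝ) (Q : Set (ℝ × ES d)) (φ : ℝ × ES d → ℝ) : Prop :=
  (∀ q ∈ Q, DifferentiableAt ℝ (fun y => φ (q.1, y)) q.2) ∧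
  ∃ M : ℝ, 0 ≤ M ∧ (∀ q ∈ Q, |φ q| ≤ M) ∧ (∀ q ∈ Q, ‖Dsp φ q‖ ≤ M) ∧ HSemiLE κ Q φ M

/-- Membership in `C^κ(Q)` for general `κ ∈ (0,2]`. -/
def MemCg {d : ℕ} (κ : ℝ) (Q : Set (ℝ × ES d)) (φ : ℝ × ES d → ℝ) : Prop :=
  ∃ M : ℝ, 0 ≤ M ∧ (∀ q ∈ Q, |φ q| ≤ M) ∧ HSemiLEg κ Q φ M ∧
    (1 < κ → (∀ q ∈ Q, DifferentiableAt ℝ (fun y => φ (q.1, y)) q.2) ∧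
      ∀ q ∈ Q, ‖Dsp φ q‖ ≤ M)

/-- `osc_Q f ≤ M`. -/
def OscLE {d : ℕ} (Q : Set (ℝ × ES d)) (f : ℝ × ES d → ℝ) (M : ℝ) : Prop :=
  ∀ p ∈ Q, ∀ q ∈ Q, f p - f q ≤ M

/-- `‖G‖_{L_p(Q)}`. -/
def LpN {d : ℕ} (p : ℝ) (Q : Set (ℝ × ES d)) (G : ℝ × ES d → ℝ) : ℝ :=
  (∫ q in Q, |G q| ^ p) ^ (1 / p)

/-- Hypotheses on the cut-off function `P`: convex, positively homogeneous of degree one,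
Lipschitz, with derivative in `𝕊_δ'` at every point of differentiability. -/
def PHyp (d : ℕ) (δ' : ℝ) (P : Matrix (Fin d) (Fin d) ℝ → ℝ) : Prop :=
  ConvexOn ℝ Set.univ P ∧
  (∀ c : ℝ, 0 ≤ c → ∀ m, P (c • m) = c * P m) ∧
  (∃ L : ℝ, ∀ m m', |P m - P m'| ≤ L * opn (m - m')) ∧
  (∀ (m : Matrix (Fin d) (Fin d) ℝ) (L : Matrix (Fin d) (Fin d) ℝ →L[ℝ] ℝ),
    HasFDerivAt P L m →
      ∃ a ∈ Sdelta d δ', ∀ b, L b = ∑ i, ∑ j, a i j * b i j)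

/-- `u` is a `C`-viscosity subsolution of `∂_t u + H(u, Du, D²u, t, x) = 0` in `Q`. -/
def ViscSubsol {d : ℕ} (H : ℝ → ES d → Matrix (Fin d) (Fin d) ℝ → ℝ → ES d → ℝ)
    (Q : Set (ℝ × ES d)) (u : ℝ × ES d → ℝ) : Prop :=
  ContinuousOn u Q ∧
  ∀ (z : ℝ × ES d) (r : ℝ), 0 < r → closure (cylAt z r) ⊆ Q →
    ∀ φ : ℝ × ES d → ℝ, ContinuousOn φ (cylAt z r) → IsC12 (cylAt z r) φ →
      (∀ q ∈ cylAt z r, u q - φ q ≤ u z - φ z) →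
      ∀ ρ : ℝ, 0 < ρ → ρ ≤ r → ∀ ε : ℝ, 0 < ε →
        0 < volume {q ∈ cylAt z ρ |
          -ε < ptd φ q + H (u q) (gradv φ q) (Hess φ q) q.1 q.2}

/-- `u` is a `C`-viscosity supersolution of `∂_t u + H(u, Du, D²u, t, x) = 0` in `Q`. -/
def ViscSupersol {d : ℕ} (H : ℝ → ES d → Matrix (Fin d) (Fin d) ℝ → ℝ → ES d → ℝ)
    (Q : Set (ℝ × ES d)) (u : ℝ × ES d → ℝ) : Prop :=
  ContinuousOn u Q ∧
  ∀ (z : ℝ × ES d) (r : ℝ), 0 < r → closure (cylAt z r) ⊆ Q →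
    ∀ φ : ℝ × ES d → ℝ, ContinuousOn φ (cylAt z r) → IsC12 (cylAt z r) φ →
      (∀ q ∈ cylAt z r, u z - φ z ≤ u q - φ q) →
      ∀ ρ : ℝ, 0 < ρ → ρ ≤ r → ∀ ε : ℝ, 0 < ε →
        0 < volume {q ∈ cylAt z ρ |
          ptd φ q + H (u q) (gradv φ q) (Hess φ q) q.1 q.2 < ε}

/-- A closed circular cone with vertex `y`, axis `u`, height and opening angle `ε`. -/
def coneAt {d : ℕ} (y u : ES d) (ε : ℝ) : Set (ES d) :=
  {x | ‖x - y‖ ≤ ε ∧ ‖x - y‖ * Real.cos ε ≤ (inner ℝ (x - y) u : ℝ)}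

/-- Uniform exterior cone condition for a bounded domain. -/
def ExtCone {d : ℕ} (Ω : Set (ES d)) : Prop :=
  ∃ ε : ℝ, 0 < ε ∧ ∀ y ∈ frontier Ω, ∃ u : ES d, ‖u‖ = 1 ∧ coneAt y u ε ⊆ Ωᶜ


/-- the barrier function `V` is a supersolution. -/
theorem statement4 (d : ℕ) (hd : 1 ≤ d) (k : Fin d) (ρ lam r : ℝ)
    (hlam : 0 < lam) (hr : 0 < r)
    (a : Matrix (Fin d) (Fin d) ℝ) (ha : a.IsSymm)
    (hakk : 0 ≤ a k k) (hakk' : a k k ≤ 1 / (4 * lam))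
    (V : ℝ × ES d → ℝ)
    (hV : ∀ q : ℝ × ES d, V q = Real.exp (-lam * |q.2 k - ρ| ^ 2 / (r ^ 2 - q.1))) :
    ∀ q : ℝ × ES d, q.1 < r ^ 2 → ptd V q + aHess a V q ≤ 0 := by
  intro q hq
  obtain ⟨t, x⟩ := q
  simp only at hq
  have hV' : ∀ p : ℝ × ES d, V p = Real.exp (-lam * (p.2 k - ρ) ^ 2 / (r ^ 2 - p.1)) := by
    intro p; rw [hV, sq_abs]
  set s : ℝ := r ^ 2 - t with hsdef
  have hs0 : 0 < s := sub_pos.mpr hq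
  set k2 : ℝ := -(2 * lam) / s with hk2
  set g : ℝ → ℝ := fun u => Real.exp (-lam * (u - ρ) ^ 2 / s) with hgdef
  set lin : ℝ → ℝ := fun u => k2 * (u - ρ) with hlindef
  set g1 : ℝ → ℝ := fun u => g u * lin u with hg1def
  set g2 : ℝ → ℝ := fun u => g1 u * lin u + g u * k2 with hg2def
  have hg : ∀ u : ℝ, HasDerivAt g (g1 u) u := by
    intro u
    have h1 : HasDerivAt (fun u : ℝ => -lam * (u - ρ) ^ 2 / s) (lin u) u := by
      have h0 := ((((hasDerivAt_id u).sub_const ρ).pow 2).const_mul (-lam)).div_const s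
      refine h0.congr_deriv ?_
      simp only [hlindef, hk2, id_eq, pow_one]
      ring
    simpa [hg1def, hgdef, mul_comm] using h1.exp
  have hg1d : ∀ u : ℝ, HasDerivAt g1 (g2 u) u := by
    intro u
    have hlin : HasDerivAt lin k2 u := by
      simpa using ((hasDerivAt_id u).sub_const ρ).const_mul k2
    exact (hg u).mul hlin
  set π : ES d →L[ℝ] ℝ := EuclideanSpace.proj k with hπ
  have hFy : ∀ y : ES d, HasFDerivAt (fun y' : ES d => V (t, y')) (g1 (y k) • π) y := by
    intro y
    have heq : (fun y' : ES d => V (t, y')) = fun y' : ES d => g (y' k) := by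
      funext y'; rw [hV' (t, y')]
    rw [heq]
    exact (hg (y k)).comp_hasFDerivAt y (π.hasFDerivAt)
  have hDsp : ∀ (y : ES d) (i : Fin d), Dsp V (t, y) (EuclideanSpace.single i (1 : ℝ))
      = g1 (y k) * (EuclideanSpace.single i (1 : ℝ) k) := by
    intro y i
    have : Dsp V (t, y) = g1 (y k) • π := (hFy y).fderiv
    rw [this]
    simp [hπ]
  have hHess : ∀ i j, Hess V (t, x) i j =
      (EuclideanSpace.single i (1 : ℝ) k) * (g2 (x k) * (EuclideanSpace.single j (1 : ℝ) k)) := by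
    intro i j
    have heq : (fun y : ES d => Dsp V ((t, x).1, y) (EuclideanSpace.single i (1 : ℝ)))
        = fun y : ES d => (EuclideanSpace.single i (1 : ℝ) k) * g1 (y k) := by
      funext y
      rw [show ((t, x) : ℝ × ES d).1 = t from rfl, hDsp y i]
      ring
    have hcomp : HasFDerivAt (fun y : ES d => g1 (y k)) (g2 (x k) • π) x :=
      by exact (hg1d (x k)).comp_hasFDerivAt x (π.hasFDerivAt)
    have hfin := hcomp.const_mul (EuclideanSpace.single i (1 : ℝ) k)
    show fderiv ℝ (fun y : ES d => Dsp V ((t, x).1, y) (EuclideanSpace.single i (1 : ℝ)))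
        ((t, x) : ℝ × ES d).2 (EuclideanSpace.single j (1 : ℝ)) = _
    rw [heq, hfin.fderiv]
    simp only [ContinuousLinearMap.smul_apply, smul_eq_mul]
    rfl
  have hA : aHess a V (t, x) = a k k * g2 (x k) := by
    unfold aHess
    simp only [hHess, EuclideanSpace.single_apply, mul_ite, ite_mul, one_mul, mul_one,
      zero_mul, mul_zero]
    rw [Finset.sum_eq_single k]
    · rw [Finset.sum_eq_single k]
      · simp
      · intro b _ hb; simp [Ne.symm hb]
      · simp
    · intro b _ hb; simp [Ne.symm hb]
    · simp
  have hc : HasDerivAt (fun s' : ℝ => V (s', x))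
      (g (x k) * (-(lam * (x k - ρ) ^ 2) / s ^ 2)) t := by
    have heq : (fun s' : ℝ => V (s', x))
        = fun s' : ℝ => Real.exp (-lam * (x k - ρ) ^ 2 / (r ^ 2 - s')) := by
      funext s'; rw [hV' (s', x)]
    rw [heq]
    have hnum : HasDerivAt (fun _ : ℝ => -lam * (x k - ρ) ^ 2) 0 t := hasDerivAt_const _ _
    have hden : HasDerivAt (fun s' : ℝ => r ^ 2 - s') (-1) t := by
      exact (hasDerivAt_id t).const_sub (r ^ 2)
    have hd := hnum.div hden (by rw [← hsdef]; exact hs0.ne')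
    have hd' : HasDerivAt (fun s' : ℝ => -lam * (x k - ρ) ^ 2 / (r ^ 2 - s'))
        (-(lam * (x k - ρ) ^ 2) / s ^ 2) t := by
      refine hd.congr_deriv ?_
      rw [← hsdef]
      field_simp
      ring
    simpa [hgdef, mul_comm] using hd'.exp
  have hptd : ptd V (t, x) = g (x k) * (-(lam * (x k - ρ) ^ 2) / s ^ 2) := by
    unfold ptd
    exact hc.deriv
  rw [hptd, hA]
  have hg2v : g2 (x k) = g (x k) * ((k2 * (x k - ρ)) ^ 2 + k2) := by
    simp only [hg2def, hg1def, hlindef]; ring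
  rw [hg2v]
  have hE : (0 : ℝ) < g (x k) := Real.exp_pos _
  set u : ℝ := x k - ρ
  have h4 : 4 * lam * a k k ≤ 1 := by
    have h4l : (0 : ℝ) < 4 * lam := by linarith
    calc 4 * lam * a k k ≤ 4 * lam * (1 / (4 * lam)) := by
          exact mul_le_mul_of_nonneg_left hakk' h4l.le
      _ = 1 := by field_simp
  have key : -(lam * u ^ 2) / s ^ 2 + a k k * ((k2 * u) ^ 2 + k2) ≤ 0 := by
    rw [hk2]
    have heq2 : -(lam * u ^ 2) / s ^ 2 + a k k * ((-(2 * lam) / s * u) ^ 2 + -(2 * lam) / s)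
        = (lam * u ^ 2 * (4 * lam * a k k - 1) - 2 * lam * a k k * s) / s ^ 2 := by
      field_simp
      ring
    rw [heq2]
    apply div_nonpos_of_nonpos_of_nonneg _ (sq_nonneg s)
    have h1 : lam * u ^ 2 * (4 * lam * a k k - 1) ≤ 0 := by
      apply mul_nonpos_of_nonneg_of_nonpos
      · positivity
      · linarith
    have h2 : 0 ≤ 2 * lam * a k k * s := by positivity
    linarith
  calc g (x k) * (-(lam * u ^ 2) / s ^ 2) + a k k * (g (x k) * ((k2 * u) ^ 2 + k2))
      = g (x k) * (-(lam * u ^ 2) / s ^ 2 + a k k * ((k2 * u) ^ 2 + k2)) := by ring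
    _ ≤ 0 := mul_nonpos_of_nonneg_of_nonpos hE.le key

end Krylov
end
end

section
/- Let d ≥ 1, δ ∈ (0,1], r ∈ (0,∞), γ ∈ (0,2], M, θ ∈ [0,∞). Let v ∈ C^{1,2}(C_r) ∩ C(C̄_r) satisfy |v(r²,x)| ≤ M|x|^γ for all |x| ≤ r (values at t = r² taken via the continuous extension), and suppose that |∂_t v(t,x) + Σ_{i,j} a^{ij}(t,x) D_{ij}v(t,x)| ≤ θ in C_r for some 𝕊_δ-valued function a on C_r. Then there exists a constant N = N(d,δ,γ) such that for all t ∈ [0,r²], |v(t,0)| ≤ N (M + r^{−γ} sup_{C_r} |v|) (r²−t)^{γ/2} + θ(r²−t). -/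
open Set MeasureTheory

noncomputable section

namespace Krylov

attribute [local instance] Matrix.normedAddCommGroup Matrix.normedSpace

open Filter Topology

section Aux
variable {d : ℕ}

lemma es_decomp (l : ES d) : l = ∑ i, l i • EuclideanSpace.single i (1:ℝ) := by
  ext j
  rw [show ((∑ i, l i • EuclideanSpace.single i (1:ℝ)) j) = ∑ i, (l i • EuclideanSpace.single i (1:ℝ)) j from by rw [WithLp.ofLp_sum, Finset.sum_apply]]
  simp [EuclideanSpace.single_apply]

lemma clm_decomp (T : ES d →L[ℝ] ℝ) (l : ES d) :
    T l = ∑ i, l i * T (EuclideanSpace.single i (1:ℝ)) := by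
  conv_lhs => rw [es_decomp l]
  rw [map_sum]
  simp [smul_eq_mul]

lemma cyl_eq (R : ℝ) : cyl d R = (Set.Ico (0:ℝ) (R^2)) ×ˢ (Metric.ball (0 : ES d) R) := by
  ext q; simp [cyl, Set.mem_prod, mem_ball_zero_iff]

lemma closure_cyl (R : ℝ) (hR : 0 < R) :
    closure (cyl d R) = (Set.Icc (0:ℝ) (R^2)) ×ˢ (Metric.closedBall (0 : ES d) R) := by
  rw [cyl_eq, closure_prod_eq, closure_Ico (by positivity : (0:ℝ) ≠ R^2), closure_ball _ (ne_of_gt hR)]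

lemma isCompact_closure_cyl (R : ℝ) (hR : 0 < R) : IsCompact (closure (cyl d R)) := by
  rw [closure_cyl R hR]
  exact (isCompact_Icc).prod (isCompact_closedBall _ _)

lemma mem_closure_cyl (R : ℝ) (hR : 0 < R) (q : ℝ × ES d) :
    q ∈ closure (cyl d R) ↔ (q.1 ∈ Set.Icc (0:ℝ) (R^2) ∧ ‖q.2‖ ≤ R) := by
  rw [closure_cyl R hR]; simp [Set.mem_prod, mem_closedBall_zero_iff]

lemma qf_dot (a : Matrix (Fin d) (Fin d) ℝ) (x : Fin d → ℝ) :
    qf a ((WithLp.equiv 2 (Fin d → ℝ)).symm x) = dotProduct (star x) (a.mulVec x) := by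
  simp only [dotProduct, Matrix.mulVec, Pi.star_apply, star_trivial, Finset.mul_sum, qf,
    WithLp.equiv_symm_apply, PiLp.toLp_apply]
  apply Finset.sum_congr rfl; intro i _
  apply Finset.sum_congr rfl; intro j _
  ring

lemma sdelta_posSemidef {δ : ℝ} (hδ : 0 < δ) {a : Matrix (Fin d) (Fin d) ℝ}
    (ha : a ∈ Sdelta d δ) : a.PosSemidef := by
  refine Matrix.PosSemidef.of_dotProduct_mulVec_nonneg ?_ ?_
  · have h1 := ha.1
    rw [Matrix.IsSymm] at h1
    rw [Matrix.IsHermitian, Matrix.conjTranspose_eq_transpose_of_trivial, h1]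
  · intro x
    have h := (ha.2 ((WithLp.equiv 2 (Fin d → ℝ)).symm x)).1
    rw [← qf_dot]
    refine le_trans ?_ h
    positivity

lemma sdelta_trace_le {δ : ℝ} {a : Matrix (Fin d) (Fin d) ℝ}
    (ha : a ∈ Sdelta d δ) : ∑ i, a i i ≤ d * δ⁻¹ := by
  have hii : ∀ i : Fin d, a i i ≤ δ⁻¹ := by
    intro i
    have h := (ha.2 (EuclideanSpace.single i (1:ℝ))).2
    rw [EuclideanSpace.norm_single] at h
    simp only [qf, EuclideanSpace.single_apply] at h
    simpa [Finset.sum_ite_eq, mul_ite] using h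
  calc ∑ i, a i i ≤ ∑ _i : Fin d, δ⁻¹ := Finset.sum_le_sum fun i _ => hii i
  _ = d * δ⁻¹ := by simp [Finset.sum_const, nsmul_eq_mul]

open scoped MatrixOrder in
lemma sdelta_pair {δ : ℝ} (hδ : 0 < δ) {a m : Matrix (Fin d) (Fin d) ℝ}
    (ha : a ∈ Sdelta d δ) (hm : ∀ l : ES d, 0 ≤ qf m l) :
    0 ≤ ∑ i, ∑ j, a i j * m i j := by
  classical
  have hps := sdelta_posSemidef hδ ha
  set s := CFC.sqrt a with hs
  have hss : s * s = a := CFC.sqrt_mul_sqrt_self a hps.nonneg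
  have hsym : ∀ i j, s i j = s j i := by
    intro i j
    have hherm := (Matrix.nonneg_iff_posSemidef.mp (CFC.sqrt_nonneg a)).1
    rw [Matrix.IsHermitian] at hherm
    conv_lhs => rw [hs, ← hherm]
    simp [Matrix.conjTranspose_apply]; rfl
  have e1 : ∀ i j : Fin d, a i j * m i j = ∑ k, s i k * s k j * m i j := by
    intro i j; rw [← hss, Matrix.mul_apply, Finset.sum_mul]
  have key : ∑ i, ∑ j, a i j * m i j
      = ∑ k, qf m ((WithLp.equiv 2 (Fin d → ℝ)).symm (fun i => s i k)) := by
    calc ∑ i, ∑ j, a i j * m i j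
        = ∑ i, ∑ j, ∑ k, s i k * s k j * m i j :=
          Finset.sum_congr rfl fun i _ => Finset.sum_congr rfl fun j _ => e1 i j
      _ = ∑ i, ∑ k, ∑ j, s i k * s k j * m i j :=
          Finset.sum_congr rfl fun i _ => Finset.sum_comm
      _ = ∑ k, ∑ i, ∑ j, s i k * s k j * m i j := Finset.sum_comm
      _ = ∑ k, qf m ((WithLp.equiv 2 (Fin d → ℝ)).symm (fun i => s i k)) := by
          apply Finset.sum_congr rfl; intro k _
          simp only [qf, WithLp.equiv_symm_apply, PiLp.toLp_apply]
          apply Finset.sum_congr rfl; intro i _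
          apply Finset.sum_congr rfl; intro j _
          rw [hsym k j]; ring
  rw [key]
  exact Finset.sum_nonneg fun k _ => hm _

lemma deriv_nonneg_of_min_right (g : ℝ → ℝ) (t₀ b : ℝ) (ht : t₀ < b)
    (hd : DifferentiableAt ℝ g t₀) (hmin : ∀ s ∈ Set.Ico t₀ b, g t₀ ≤ g s) :
    0 ≤ deriv g t₀ := by
  have h := hd.hasDerivAt
  rw [hasDerivAt_iff_tendsto_slope] at h
  have h2 : Tendsto (slope g t₀) (𝓝[>] t₀) (𝓝 (deriv g t₀)) :=
    h.mono_left (nhdsWithin_mono _ (fun x hx => ne_of_gt hx))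
  refine ge_of_tendsto h2 ?_
  filter_upwards [Ioo_mem_nhdsGT_of_mem ⟨le_refl t₀, ht⟩] with s hs
  rw [slope_def_field]
  exact div_nonneg (sub_nonneg.2 (hmin s ⟨hs.1.le, hs.2⟩)) (sub_nonneg.2 hs.1.le)

lemma deriv2_nonneg_of_min (φ h : ℝ → ℝ) (ε : ℝ) (hε : 0 < ε) (D : ℝ)
    (hh : ∀ s : ℝ, |s| < ε → HasDerivAt h (φ s) s)
    (hmin : ∀ s : ℝ, |s| < ε → h 0 ≤ h s)
    (hφ : HasDerivAt φ D 0) : 0 ≤ D := by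
  have hball : Set.Ioo (-ε) ε ∈ 𝓝 (0:ℝ) := Ioo_mem_nhds (by linarith) hε
  have hloc : IsLocalMin h 0 :=
    Filter.eventually_of_mem hball (fun s hs => hmin s (abs_lt.2 ⟨hs.1, hs.2⟩))
  have hd0 : deriv h 0 = 0 := hloc.deriv_eq_zero
  have hφ0 : φ 0 = 0 := by rw [← (hh 0 (by simpa using hε)).deriv, hd0]
  by_contra hD
  push_neg at hD
  have hD' : D < 0 := hD
  have hs := hφ
  rw [hasDerivAt_iff_tendsto_slope] at hs
  have h2 : Tendsto (slope φ 0) (𝓝[>] 0) (𝓝 D) :=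
    hs.mono_left (nhdsWithin_mono _ (fun x hx => ne_of_gt hx))
  have hev : ∀ᶠ s in 𝓝[>] (0:ℝ), slope φ 0 s < 0 := h2.eventually_lt_const hD'
  rw [eventually_nhdsWithin_iff] at hev
  rcases Metric.eventually_nhds_iff.1 hev with ⟨η, hη, hball2⟩
  set s₀ : ℝ := min (ε/2) (η/2) with hs₀
  have hs₀pos : 0 < s₀ := lt_min (by linarith) (by linarith)
  have hs₀ε : s₀ < ε := lt_of_le_of_lt (min_le_left _ _) (by linarith)
  have hcont : ContinuousOn h (Set.Icc 0 s₀) := by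
    intro s hsmem
    refine ((hh s ?_).continuousAt).continuousWithinAt
    rw [abs_lt]; constructor <;> [linarith [hsmem.1]; exact lt_of_le_of_lt hsmem.2 hs₀ε]
  have hder : ∀ s ∈ Set.Ioo (0:ℝ) s₀, HasDerivAt h (φ s) s := by
    intro s hsmem
    refine hh s ?_
    rw [abs_lt]; constructor <;> [linarith [hsmem.1]; exact lt_trans hsmem.2 hs₀ε]
  obtain ⟨c, hc, hceq⟩ := exists_hasDerivAt_eq_slope h φ hs₀pos hcont hder
  have hφc : 0 ≤ φ c := by
    rw [hceq]
    have : h 0 ≤ h s₀ := hmin s₀ (by rw [abs_of_pos hs₀pos]; exact hs₀ε)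
    exact div_nonneg (by linarith) (by linarith)
  have hclt : slope φ 0 c < 0 := by
    apply hball2 (by rw [Real.dist_eq, sub_zero, abs_of_pos hc.1]; exact lt_of_lt_of_le hc.2 (le_trans (min_le_right _ _) (by linarith))) hc.1
  rw [slope_def_field, hφ0, sub_zero, sub_zero] at hclt
  have hneg : φ c < 0 := by
    by_contra hge
    push_neg at hge
    exact absurd hclt (not_lt.2 (div_nonneg hge hc.1.le))
  linarith

end Aux

section MinTest
variable {d : ℕ}

lemma min_test {r : ℝ} (hr : 0 < r) (w : ℝ × ES d → ℝ) (q₀ : ℝ × ES d)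
    (hq₀ : q₀ ∈ cyl d r) (hmin : ∀ q ∈ cyl d r, w q₀ ≤ w q)
    (hdt : DifferentiableAt ℝ (fun s => w (s, q₀.2)) q₀.1)
    (hd1 : ∀ y : ES d, ‖y‖ < r → DifferentiableAt ℝ (fun y' => w (q₀.1, y')) y)
    (hd2 : ∀ y : ES d, ‖y‖ < r → ∀ i : Fin d,
      DifferentiableAt ℝ (fun y' => Dsp w (q₀.1, y') (EuclideanSpace.single i (1:ℝ))) y) :
    0 ≤ ptd w q₀ ∧ ∀ l : ES d, 0 ≤ qf (Hess w q₀) l := by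
  obtain ⟨t₀, x₀⟩ := q₀
  obtain ⟨⟨ht0, ht1⟩, hx⟩ := hq₀
  constructor
  · -- time derivative test
    refine deriv_nonneg_of_min_right _ t₀ (r^2) ht1 hdt ?_
    intro s hs
    exact hmin (s, x₀) ⟨⟨le_trans ht0 hs.1, hs.2⟩, hx⟩
  · -- spatial second derivative test
    intro l
    set ε : ℝ := (r - ‖x₀‖) / (‖l‖ + 1) with hε
    have hεpos : 0 < ε := div_pos (by linarith) (by positivity)
    set c : ℝ → ES d := fun s => x₀ + s • l with hc
    have hmem : ∀ s : ℝ, |s| < ε → ‖c s‖ < r := by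
      intro s hs
      calc ‖x₀ + s • l‖ ≤ ‖x₀‖ + ‖s • l‖ := norm_add_le _ _
        _ = ‖x₀‖ + |s| * ‖l‖ := by rw [norm_smul, Real.norm_eq_abs]
        _ ≤ ‖x₀‖ + |s| * (‖l‖ + 1) := by nlinarith [abs_nonneg s, norm_nonneg l]
        _ < ‖x₀‖ + ε * (‖l‖ + 1) := by
            have : (0:ℝ) < ‖l‖ + 1 := by positivity
            nlinarith
        _ = r := by rw [hε]; field_simp; ring
    have hcd : ∀ s : ℝ, HasDerivAt c l s := by
      intro s
      simpa [hc] using ((hasDerivAt_id s).smul_const l).const_add x₀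
    have hc0 : c 0 = x₀ := by simp [hc]
    -- h and φ
    set h : ℝ → ℝ := fun s => w (t₀, c s) with hhdef
    set φ : ℝ → ℝ := fun s => (Dsp w (t₀, c s)) l with hφdef
    have hh : ∀ s : ℝ, |s| < ε → HasDerivAt h (φ s) s := by
      intro s hs
      have hf : HasFDerivAt (fun y => w (t₀, y)) (Dsp w (t₀, c s)) (c s) :=
        (hd1 (c s) (hmem s hs)).hasFDerivAt
      exact hf.comp_hasDerivAt s (hcd s)
    have hminh : ∀ s : ℝ, |s| < ε → h 0 ≤ h s := by
      intro s hs
      rw [hhdef]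
      simp only [hc0]
      exact hmin (t₀, c s) ⟨⟨ht0, ht1⟩, hmem s hs⟩
    -- derivative of φ at 0
    set D : ℝ := ∑ i, l i * (∑ j, l j * Hess w (t₀, x₀) i j) with hD
    have hψ : ∀ i : Fin d, HasDerivAt (fun s => (Dsp w (t₀, c s)) (EuclideanSpace.single i (1:ℝ)))
        (∑ j, l j * Hess w (t₀, x₀) i j) 0 := by
      intro i
      have hdiff := hd2 x₀ hx i
      have hf : HasFDerivAt (fun y => (Dsp w (t₀, y)) (EuclideanSpace.single i (1:ℝ)))
          (fderiv ℝ (fun y => (Dsp w (t₀, y)) (EuclideanSpace.single i (1:ℝ))) x₀) (c 0) := by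
        rw [hc0]; exact hdiff.hasFDerivAt
      have := hf.comp_hasDerivAt 0 (hcd 0)
      refine this.congr_deriv ?_
      rw [clm_decomp]
      rfl
    have hφD : HasDerivAt φ D 0 := by
      have hsum : HasDerivAt (fun s => ∑ i, l i * (Dsp w (t₀, c s)) (EuclideanSpace.single i (1:ℝ))) D 0 := by
        rw [hD]
        exact HasDerivAt.fun_sum (fun i _ => (hψ i).const_mul (l i))
      have heq : φ = fun s => ∑ i, l i * (Dsp w (t₀, c s)) (EuclideanSpace.single i (1:ℝ)) := by
        funext s
        rw [hφdef]
        exact clm_decomp _ l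
      rw [heq]
      exact hsum
    have hDpos : 0 ≤ D := deriv2_nonneg_of_min φ h ε hεpos D hh hminh hφD
    have hqf : qf (Hess w (t₀, x₀)) l = D := by
      rw [qf, hD]
      apply Finset.sum_congr rfl; intro i _
      rw [Finset.mul_sum]
      apply Finset.sum_congr rfl; intro j _
      ring
    rw [hqf]
    exact hDpos

end MinTest

section Comparison
variable {d : ℕ}

lemma comparison {r δ : ℝ} (hr : 0 < r) (hδ : 0 < δ)
    (v B : ℝ × ES d → ℝ)
    (hv12 : IsC12 (cyl d r) v)
    (hvc : ContinuousOn v (closure (cyl d r)))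
    (hBc : ContinuousOn B (closure (cyl d r)))
    (hBdt : ∀ q ∈ cyl d r, DifferentiableAt ℝ (fun s => B (s, q.2)) q.1)
    (hB1 : ∀ q ∈ cyl d r, DifferentiableAt ℝ (fun y => B (q.1, y)) q.2)
    (hB2 : ∀ q ∈ cyl d r, ∀ i : Fin d,
      DifferentiableAt ℝ (fun y => Dsp B (q.1, y) (EuclideanSpace.single i (1:ℝ))) q.2)
    (a : (ℝ × ES d) → Matrix (Fin d) (Fin d) ℝ)
    (haS : ∀ q ∈ cyl d r, a q ∈ Sdelta d δ)
    (hstrict : ∀ q ∈ cyl d r, ptd B q + aHess (a q) B q < ptd v q + aHess (a q) v q)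
    (hbd : ∀ q ∈ closure (cyl d r) \ cyl d r, v q ≤ B q) :
    ∀ q ∈ closure (cyl d r), v q ≤ B q := by
  obtain ⟨hvdt, _, hv1, _, hv2, _⟩ := hv12
  set w : ℝ × ES d → ℝ := fun q => B q - v q with hw
  have hwc : ContinuousOn w (closure (cyl d r)) := hBc.sub hvc
  have hne : (closure (cyl d r)).Nonempty :=
    ⟨(0, 0), subset_closure ⟨⟨le_refl 0, by positivity⟩, by simpa using hr⟩⟩
  obtain ⟨q₀, hq₀mem, hq₀min⟩ := (isCompact_closure_cyl r hr).exists_isMinOn hne hwc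
  by_cases hq₀ : q₀ ∈ cyl d r
  · -- contradiction via derivative tests
    exfalso
    have hmem' : ∀ y : ES d, ‖y‖ < r → (q₀.1, y) ∈ cyl d r := fun y hy => ⟨hq₀.1, hy⟩
    have hopen : IsOpen {y : ES d | ‖y‖ < r} := by
      have : {y : ES d | ‖y‖ < r} = Metric.ball 0 r := by ext y; simp [mem_ball_zero_iff]
      rw [this]; exact Metric.isOpen_ball
    -- Dsp of w on cyl
    have hDspw : ∀ q ∈ cyl d r, Dsp w q = Dsp B q - Dsp v q := by
      intro q hq
      exact fderiv_sub (hB1 q hq) (hv1 q hq)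
    have hd1w : ∀ y : ES d, ‖y‖ < r → DifferentiableAt ℝ (fun y' => w (q₀.1, y')) y :=
      fun y hy => (hB1 _ (hmem' y hy)).sub (hv1 _ (hmem' y hy))
    have hd2w : ∀ y : ES d, ‖y‖ < r → ∀ i : Fin d,
        DifferentiableAt ℝ (fun y' => Dsp w (q₀.1, y') (EuclideanSpace.single i (1:ℝ))) y := by
      intro y hy i
      have heq : (fun y' => Dsp w (q₀.1, y') (EuclideanSpace.single i (1:ℝ)))
          =ᶠ[𝓝 y] (fun y' => Dsp B (q₀.1, y') (EuclideanSpace.single i (1:ℝ))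
            - Dsp v (q₀.1, y') (EuclideanSpace.single i (1:ℝ))) := by
        filter_upwards [hopen.mem_nhds hy] with y' hy'
        rw [hDspw _ (hmem' y' hy')]
        rfl
      rw [Filter.EventuallyEq.differentiableAt_iff heq]
      exact ((hB2 _ (hmem' y hy) i)).sub (hv2 _ (hmem' y hy) i)
    have hdtw : DifferentiableAt ℝ (fun s => w (s, q₀.2)) q₀.1 :=
      (hBdt q₀ hq₀).sub (hvdt q₀ hq₀)
    have hminw : ∀ q ∈ cyl d r, w q₀ ≤ w q := fun q hq => hq₀min (subset_closure hq)
    obtain ⟨htime, hspace⟩ := min_test hr w q₀ hq₀ hminw hdtw hd1w hd2w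
    -- ptd w = ptd B - ptd v
    have hptdw : ptd w q₀ = ptd B q₀ - ptd v q₀ := by
      rw [ptd, ptd, ptd, ← deriv_fun_sub (hBdt q₀ hq₀) (hvdt q₀ hq₀)]
    -- Hess w = Hess B - Hess v
    have hHessw : ∀ i j : Fin d, Hess w q₀ i j = Hess B q₀ i j - Hess v q₀ i j := by
      intro i j
      have heq : (fun y' => Dsp w (q₀.1, y') (EuclideanSpace.single i (1:ℝ)))
          =ᶠ[𝓝 q₀.2] (fun y' => Dsp B (q₀.1, y') (EuclideanSpace.single i (1:ℝ))
            - Dsp v (q₀.1, y') (EuclideanSpace.single i (1:ℝ))) := by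
        filter_upwards [hopen.mem_nhds hq₀.2] with y' hy'
        rw [hDspw _ (hmem' y' hy')]
        rfl
      rw [Hess, Hess, Hess, heq.fderiv_eq, fderiv_fun_sub (hB2 q₀ hq₀ i) (hv2 q₀ hq₀ i)]
      rfl
    have hkey : 0 ≤ ∑ i, ∑ j, (a q₀) i j * Hess w q₀ i j :=
      sdelta_pair hδ (haS q₀ hq₀) hspace
    have hsplit : ∑ i, ∑ j, (a q₀) i j * Hess w q₀ i j
        = aHess (a q₀) B q₀ - aHess (a q₀) v q₀ := by
      rw [aHess, aHess, ← Finset.sum_sub_distrib]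
      apply Finset.sum_congr rfl; intro i _
      rw [← Finset.sum_sub_distrib]
      apply Finset.sum_congr rfl; intro j _
      rw [hHessw i j]; ring
    have := hstrict q₀ hq₀
    rw [hsplit] at hkey
    rw [hptdw] at htime
    linarith
  · -- minimum on the parabolic boundary
    intro q hq
    have h0 : 0 ≤ w q₀ := by
      have := hbd q₀ ⟨hq₀mem, hq₀⟩
      simp only [hw]; linarith
    have h2 := hq₀min hq
    simp only [Set.mem_setOf_eq] at h2
    simp only [hw] at h0 h2
    linarith

end Comparison

section Barrier
variable {d : ℕ}

def nq (y : ES d) : ℝ := ∑ i, (y i)^2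

lemma nq_nonneg (y : ES d) : 0 ≤ nq y := Finset.sum_nonneg fun i _ => sq_nonneg _

lemma nq_eq_norm_sq (y : ES d) : nq y = ‖y‖^2 := by
  rw [EuclideanSpace.norm_eq, Real.sq_sqrt (Finset.sum_nonneg fun i _ => sq_nonneg _)]
  unfold nq
  apply Finset.sum_congr rfl; intro i _
  rw [Real.norm_eq_abs, sq_abs]

def Ln (y : ES d) : ES d →L[ℝ] ℝ :=
  ∑ i, (2 * y i) • (EuclideanSpace.proj i : ES d →L[ℝ] ℝ)

lemma Ln_single (y : ES d) (i : Fin d) : Ln y (EuclideanSpace.single i (1:ℝ)) = 2 * y i := by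
  rw [Ln, ContinuousLinearMap.sum_apply]
  have : ∀ j : Fin d, ((2 * y j) • (EuclideanSpace.proj j : ES d →L[ℝ] ℝ))
      (EuclideanSpace.single i (1:ℝ)) = if i = j then 2 * y j else 0 := by
    intro j
    rw [ContinuousLinearMap.smul_apply]
    have : (EuclideanSpace.proj j : ES d →L[ℝ] ℝ) (EuclideanSpace.single i (1:ℝ)) = if i = j then 1 else 0 := by
      simp [EuclideanSpace.single_apply]
      exact if_congr eq_comm rfl rfl
    rw [this]
    simp [smul_eq_mul]
  rw [Finset.sum_congr rfl (fun j _ => this j)]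
  simp

lemma hasFDerivAt_nq (y : ES d) : HasFDerivAt nq (Ln y) y := by
  have h : ∀ i : Fin d, HasFDerivAt (fun z : ES d => (z i)^2)
      ((2 * y i) • (EuclideanSpace.proj i : ES d →L[ℝ] ℝ)) y := by
    intro i
    have hp0 := (EuclideanSpace.proj (𝕜 := ℝ) i : ES d →L[ℝ] ℝ).hasFDerivAt (x := y)
    have hp : HasFDerivAt (fun z : ES d => z i)
        (EuclideanSpace.proj i : ES d →L[ℝ] ℝ) y := hp0
    have h2 : (fun z : ES d => (z i)^2) = fun z : ES d => z i * z i := by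
      funext z; ring
    rw [h2, two_mul, add_smul]
    exact hp.mul hp
  have := HasFDerivAt.fun_sum (u := Finset.univ) (fun i _ => h i)
  exact this

def FF (μ r : ℝ) (q : ℝ × ES d) : ℝ := μ * (r^2 - q.1) + nq q.2

def barr (K μ cc γ r : ℝ) (q : ℝ × ES d) : ℝ :=
  K * (FF μ r q) ^ (γ/2) + cc * (r^2 - q.1)

lemma FF_pos {μ r t : ℝ} (hμt : 0 < μ * (r^2 - t)) (y : ES d) : 0 < FF μ r (t, y) :=
  lt_of_lt_of_le hμt (le_add_of_nonneg_right (nq_nonneg y))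

lemma barr_time (K μ cc γ r : ℝ) (t : ℝ) (y : ES d) (hF : FF μ r (t, y) ≠ 0) :
    HasDerivAt (fun s => barr K μ cc γ r (s, y))
      (-(K * (γ/2) * μ * (FF μ r (t, y)) ^ (γ/2 - 1)) - cc) t := by
  have h1 : HasDerivAt (fun s : ℝ => μ * (r^2 - s) + nq y) (-μ) t := by
    simpa using ((((hasDerivAt_id t).const_sub (r^2)).const_mul μ).add_const (nq y))
  have h2 : HasDerivAt (fun x : ℝ => x ^ (γ/2))
      ((γ/2) * (FF μ r (t, y)) ^ (γ/2 - 1)) (FF μ r (t, y)) :=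
    Real.hasDerivAt_rpow_const (Or.inl hF)
  have h3 : HasDerivAt (fun s : ℝ => (μ * (r^2 - s) + nq y) ^ (γ/2))
      ((γ/2) * (FF μ r (t, y)) ^ (γ/2 - 1) * (-μ)) t := by have h := h2.comp t h1; exact h
  have h4 : HasDerivAt (fun s : ℝ => cc * (r^2 - s)) (cc * (-1)) t := by
    simpa using (((hasDerivAt_id t).const_sub (r^2)).const_mul cc)
  have h5 := (h3.const_mul K).add h4
  refine h5.congr_deriv ?_
  ring

lemma barr_space (K μ cc γ r : ℝ) (t : ℝ) (y : ES d) (hF : FF μ r (t, y) ≠ 0) :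
    HasFDerivAt (fun y' => barr K μ cc γ r (t, y'))
      ((K * ((γ/2) * (FF μ r (t, y)) ^ (γ/2 - 1))) • Ln y) y := by
  have h1 : HasFDerivAt (fun y' : ES d => μ * (r^2 - t) + nq y') (Ln y) y :=
    (hasFDerivAt_nq y).const_add _
  have h2 : HasDerivAt (fun x : ℝ => x ^ (γ/2))
      ((γ/2) * (FF μ r (t, y)) ^ (γ/2 - 1)) (FF μ r (t, y)) :=
    Real.hasDerivAt_rpow_const (Or.inl hF)
  have h3 := h2.comp_hasFDerivAt y h1
  have h4 := (h3.const_mul K).add_const (cc * (r^2 - t))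
  rw [smul_smul] at h4
  exact h4

lemma Dsp_barr (K μ cc γ r : ℝ) (t : ℝ) (y : ES d) (hF : FF μ r (t, y) ≠ 0) :
    Dsp (barr K μ cc γ r) (t, y) = (K * ((γ/2) * (FF μ r (t, y)) ^ (γ/2 - 1))) • Ln y :=
  (barr_space K μ cc γ r t y hF).fderiv

lemma Dsp_barr_single (K μ cc γ r : ℝ) (t : ℝ) (y : ES d) (hF : FF μ r (t, y) ≠ 0) (i : Fin d) :
    Dsp (barr K μ cc γ r) (t, y) (EuclideanSpace.single i (1:ℝ))
      = (K * (γ/2)) * ((FF μ r (t, y)) ^ (γ/2 - 1) * (2 * y i)) := by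
  rw [Dsp_barr K μ cc γ r t y hF, ContinuousLinearMap.smul_apply, Ln_single]
  simp [smul_eq_mul]; ring

lemma barr_G (K μ cc γ r t : ℝ) (hμt : 0 < μ * (r^2 - t)) (y : ES d) (i : Fin d) :
    HasFDerivAt (fun y' => Dsp (barr K μ cc γ r) (t, y') (EuclideanSpace.single i (1:ℝ)))
      ((K * (γ/2)) • ((FF μ r (t, y)) ^ (γ/2 - 1) • ((2:ℝ) • (EuclideanSpace.proj i : ES d →L[ℝ] ℝ))
        + (2 * y i) • (((γ/2 - 1) * (FF μ r (t, y)) ^ (γ/2 - 1 - 1)) • Ln y))) y := by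
  have heq : (fun y' : ES d => Dsp (barr K μ cc γ r) (t, y') (EuclideanSpace.single i (1:ℝ)))
      = fun y' : ES d => (K * (γ/2)) * ((FF μ r (t, y')) ^ (γ/2 - 1) * (2 * y' i)) := by
    funext y'
    exact Dsp_barr_single K μ cc γ r t y' (ne_of_gt (FF_pos hμt y')) i
  rw [heq]
  have h1 : HasFDerivAt (fun y' : ES d => μ * (r^2 - t) + nq y') (Ln y) y :=
    (hasFDerivAt_nq y).const_add _
  have hA : HasFDerivAt (fun y' : ES d => (FF μ r (t, y')) ^ (γ/2 - 1))
      (((γ/2 - 1) * (FF μ r (t, y)) ^ (γ/2 - 1 - 1)) • Ln y) y :=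
    by have h := (Real.hasDerivAt_rpow_const (p := γ/2 - 1) (Or.inl (ne_of_gt (FF_pos hμt y)))).comp_hasFDerivAt y h1; exact h
  have hB : HasFDerivAt (fun y' : ES d => 2 * y' i)
      ((2:ℝ) • (EuclideanSpace.proj i : ES d →L[ℝ] ℝ)) y := by
    have hp0 := (EuclideanSpace.proj (𝕜 := ℝ) i : ES d →L[ℝ] ℝ).hasFDerivAt (x := y)
    have hp : HasFDerivAt (fun z : ES d => z i)
        (EuclideanSpace.proj i : ES d →L[ℝ] ℝ) y := hp0
    exact hp.const_mul 2
  exact (hA.mul hB).const_mul (K * (γ/2))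

lemma Hess_barr (K μ cc γ r t : ℝ) (hμt : 0 < μ * (r^2 - t)) (y : ES d) (i j : Fin d) :
    Hess (barr K μ cc γ r) (t, y) i j =
      K * γ * (FF μ r (t, y)) ^ (γ/2 - 1) * (if i = j then 1 else 0)
      + K * γ * (γ - 2) * (FF μ r (t, y)) ^ (γ/2 - 2) * (y i * y j) := by
  have h := (barr_G K μ cc γ r t hμt y i).fderiv
  show fderiv ℝ (fun y' => Dsp (barr K μ cc γ r) (t, y') (EuclideanSpace.single i (1:ℝ))) y
      (EuclideanSpace.single j (1:ℝ)) = _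
  rw [h]
  have hproj : (EuclideanSpace.proj i : ES d →L[ℝ] ℝ) (EuclideanSpace.single j (1:ℝ))
      = if i = j then 1 else 0 := by
    simp [EuclideanSpace.single_apply]
  simp only [ContinuousLinearMap.smul_apply, ContinuousLinearMap.add_apply]
  rw [Ln_single, hproj]
  rw [show γ/2 - 1 - 1 = γ/2 - 2 by ring]
  by_cases hij : i = j <;> simp [hij, smul_eq_mul] <;> ring

lemma barr_pde {δ : ℝ} (hδ : 0 < δ) (K μ cc γ r t : ℝ) (hK : 0 ≤ K) (hγ : 0 < γ) (hγ2 : γ ≤ 2)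
    (hμ : μ = 2 * d * δ⁻¹ + 1) (hμt : 0 < μ * (r^2 - t)) (y : ES d)
    {a : Matrix (Fin d) (Fin d) ℝ} (ha : a ∈ Sdelta d δ) :
    ptd (barr K μ cc γ r) (t, y) + aHess a (barr K μ cc γ r) (t, y) ≤ -cc := by
  have hF : 0 < FF μ r (t, y) := FF_pos hμt y
  set F := FF μ r (t, y) with hFdef
  have hptd : ptd (barr K μ cc γ r) (t, y) = -(K * (γ/2) * μ * F ^ (γ/2 - 1)) - cc :=
    (barr_time K μ cc γ r t y (ne_of_gt hF)).deriv
  set c1 := K * γ * F ^ (γ/2 - 1) with hc1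
  set c2 := K * γ * (γ - 2) * F ^ (γ/2 - 2) with hc2
  have haH : aHess a (barr K μ cc γ r) (t, y) = c1 * (∑ i, a i i) + c2 * qf a y := by
    rw [aHess]
    calc ∑ i, ∑ j, a i j * Hess (barr K μ cc γ r) (t, y) i j
        = ∑ i, ∑ j, (c1 * (if i = j then a i j else 0) + c2 * (a i j * ((t,y).2 i * (t,y).2 j))) := by
          apply Finset.sum_congr rfl; intro i _
          apply Finset.sum_congr rfl; intro j _
          rw [Hess_barr K μ cc γ r t hμt y i j]
          by_cases hij : i = j <;> simp [hij] <;> ring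
      _ = ∑ i, ((∑ j, c1 * (if i = j then a i j else 0)) + ∑ j, c2 * (a i j * (y i * y j))) := by
          apply Finset.sum_congr rfl; intro i _
          rw [Finset.sum_add_distrib]
      _ = c1 * (∑ i, a i i) + c2 * qf a y := by
          rw [Finset.sum_add_distrib, qf]
          congr 1
          · rw [Finset.mul_sum]
            apply Finset.sum_congr rfl; intro i _
            rw [← Finset.mul_sum]
            congr 1
            simp [Finset.sum_ite_eq]
          · rw [Finset.mul_sum]
            apply Finset.sum_congr rfl; intro i _
            rw [Finset.mul_sum]
            apply Finset.sum_congr rfl; intro j _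
            ring
  rw [hptd, haH]
  have htr : ∑ i, a i i ≤ d * δ⁻¹ := sdelta_trace_le ha
  have hqf : 0 ≤ qf a y := le_trans (by positivity) ((ha.2 y).1)
  have hFp : 0 < F ^ (γ/2 - 1) := Real.rpow_pos_of_pos hF _
  have hFp2 : 0 < F ^ (γ/2 - 2) := Real.rpow_pos_of_pos hF _
  have hc1pos : 0 ≤ c1 := by rw [hc1]; positivity
  have h2 : c2 * qf a y ≤ 0 := by
    apply mul_nonpos_of_nonpos_of_nonneg _ hqf
    rw [hc2]
    have h0 : γ - 2 ≤ 0 := by linarith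
    nlinarith [mul_nonneg (mul_nonneg hK hγ.le) hFp2.le]
  have h1 : c1 * (∑ i, a i i) ≤ c1 * (d * δ⁻¹) := mul_le_mul_of_nonneg_left htr hc1pos
  have hkey : c1 * (d * δ⁻¹) ≤ K * (γ/2) * μ * F ^ (γ/2 - 1) := by
    rw [hc1, hμ]
    have hδi : 0 ≤ δ⁻¹ := by positivity
    nlinarith [hFp.le, mul_nonneg hK hγ.le, mul_nonneg (mul_nonneg hK hγ.le) hFp.le]
  linarith

lemma barr_cont (K μ cc γ r : ℝ) (hγ : 0 < γ) : Continuous (barr (d := d) K μ cc γ r) := by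
  have hFF : Continuous (FF (d := d) μ r) := by
    apply Continuous.add
    · exact continuous_const.mul (continuous_const.sub continuous_fst)
    · exact continuous_finset_sum _ fun i _ =>
        ((EuclideanSpace.proj (𝕜 := ℝ) i : ES d →L[ℝ] ℝ).continuous.comp continuous_snd).pow 2
  apply Continuous.add
  · apply Continuous.mul continuous_const
    apply continuous_iff_continuousAt.2
    intro q
    exact (Real.continuousAt_rpow_const _ _ (Or.inr (by positivity))).comp hFF.continuousAt
  · exact continuous_const.mul (continuous_const.sub continuous_fst)

lemma Dsp_neg (v : ℝ × ES d → ℝ) (q : ℝ × ES d) : Dsp (fun p => -v p) q = -Dsp v q := by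
  rw [Dsp, Dsp, ← fderiv_neg]; rfl

lemma ptd_neg (v : ℝ × ES d → ℝ) (q : ℝ × ES d) : ptd (fun p => -v p) q = -ptd v q := by
  rw [ptd, ptd, ← deriv.neg]; rfl

lemma Hess_neg (v : ℝ × ES d → ℝ) (q : ℝ × ES d) (i j : Fin d) :
    Hess (fun p => -v p) q i j = -Hess v q i j := by
  rw [Hess, Hess]
  have heq : (fun y => Dsp (fun p => -v p) (q.1, y) (EuclideanSpace.single i (1:ℝ)))
      = fun y => -(Dsp v (q.1, y) (EuclideanSpace.single i (1:ℝ))) := by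
    funext y
    rw [Dsp_neg]
    simp
  rw [heq, fderiv_fun_neg]
  simp

lemma aHess_neg (a : Matrix (Fin d) (Fin d) ℝ) (v : ℝ × ES d → ℝ) (q : ℝ × ES d) :
    aHess a (fun p => -v p) q = -aHess a v q := by
  rw [aHess, aHess, ← Finset.sum_neg_distrib]
  apply Finset.sum_congr rfl; intro i _
  rw [← Finset.sum_neg_distrib]
  apply Finset.sum_congr rfl; intro j _
  rw [Hess_neg]; ring

lemma IsC12_neg {Q : Set (ℝ × ES d)} {v : ℝ × ES d → ℝ} (h : IsC12 Q v) :
    IsC12 Q (fun p => -v p) := by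
  obtain ⟨h1, h2, h3, h4, h5, h6⟩ := h
  refine ⟨fun q hq => (h1 q hq).neg, ?_, fun q hq => (h3 q hq).neg, ?_, ?_, ?_⟩
  · have : ptd (fun p => -v p) = fun q => -ptd v q := funext fun q => ptd_neg v q
    rw [this]; exact h2.neg
  · have : Dsp (fun p => -v p) = fun q => -Dsp v q := funext fun q => Dsp_neg v q
    rw [this]; exact h4.neg
  · intro q hq i
    have heq : (fun y => Dsp (fun p => -v p) (q.1, y) (EuclideanSpace.single i (1:ℝ)))
        = fun y => -(Dsp v (q.1, y) (EuclideanSpace.single i (1:ℝ))) := by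
      funext y; rw [Dsp_neg]; simp
    rw [heq]
    exact (h5 q hq i).neg
  · have : Hess (fun p => -v p) = fun q => -Hess v q := by
      funext q
      ext i j
      rw [Hess_neg]; simp
    rw [this]
    exact h6.neg

lemma abs_le_closure {r S : ℝ} (hr : 0 < r) (v : ℝ × ES d → ℝ)
    (hvc : ContinuousOn v (closure (cyl d r)))
    (hS : ∀ q ∈ cyl d r, |v q| ≤ S) :
    ∀ q ∈ closure (cyl d r), |v q| ≤ S := by
  intro q hq
  have hne : (𝓝[cyl d r] q).NeBot := mem_closure_iff_nhdsWithin_neBot.1 hq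
  have ht : Tendsto v (𝓝[cyl d r] q) (𝓝 (v q)) :=
    ((hvc q hq).mono subset_closure)
  refine le_of_tendsto ht.abs ?_
  filter_upwards [eventually_mem_nhdsWithin] with p hp
  exact hS p hp

end Barrier

section Main
variable {d : ℕ}

lemma one_side {δ γ r M θ S εB : ℝ} (hδ : δ ∈ Set.Ioc (0:ℝ) 1) (hγ : γ ∈ Set.Ioc (0:ℝ) 2)
    (hr : 0 < r) (hM : 0 ≤ M) (hθ : 0 ≤ θ) (hS : 0 ≤ S) (hεB : 0 < εB)
    (u : ℝ × ES d → ℝ) (hu12 : IsC12 (cyl d r) u)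
    (huc : ContinuousOn u (closure (cyl d r)))
    (hbdry : ∀ x : ES d, ‖x‖ ≤ r → |u (r ^ 2, x)| ≤ M * ‖x‖ ^ γ)
    (a : ℝ × ES d → Matrix (Fin d) (Fin d) ℝ)
    (haS : ∀ q ∈ cyl d r, a q ∈ Sdelta d δ)
    (hlow : ∀ q ∈ cyl d r, -θ ≤ ptd u q + aHess (a q) u q)
    (hSbd : ∀ q ∈ closure (cyl d r), |u q| ≤ S) :
    ∀ q ∈ closure (cyl d r), u q ≤ barr (M + r ^ (-γ) * S) (2 * d * δ⁻¹ + 1) (θ + εB) γ r q := by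
  have hδ0 : 0 < δ := hδ.1
  have hγ0 : 0 < γ := hγ.1
  set K : ℝ := M + r ^ (-γ) * S with hK
  set μ : ℝ := 2 * d * δ⁻¹ + 1 with hμdef
  set cc : ℝ := θ + εB with hcc
  have hμ0 : 0 < μ := by rw [hμdef]; positivity
  have hK0 : 0 ≤ K := by
    rw [hK]
    have : (0:ℝ) ≤ r ^ (-γ) * S := mul_nonneg (Real.rpow_nonneg hr.le _) hS
    linarith
  have hμt : ∀ q ∈ cyl d r, 0 < μ * (r^2 - q.1) := by
    intro q hq
    have := hq.1.2
    have h2 : 0 < r^2 - q.1 := by linarith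
    positivity
  refine comparison hr hδ0 u (barr K μ cc γ r) hu12 huc
    ((barr_cont K μ cc γ r hγ0).continuousOn) ?_ ?_ ?_ a haS ?_ ?_
  · intro q hq
    exact (barr_time K μ cc γ r q.1 q.2 (ne_of_gt (FF_pos (hμt q hq) q.2))).differentiableAt
  · intro q hq
    exact (barr_space K μ cc γ r q.1 q.2 (ne_of_gt (FF_pos (hμt q hq) q.2))).differentiableAt
  · intro q hq i
    exact (barr_G K μ cc γ r q.1 (hμt q hq) q.2 i).differentiableAt
  · -- strict inequality
    rintro ⟨t, y⟩ hq
    have h1 : ptd (barr K μ cc γ r) (t, y) + aHess (a (t, y)) (barr K μ cc γ r) (t, y) ≤ -cc :=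
      barr_pde hδ0 K μ cc γ r t hK0 hγ0 hγ.2 hμdef (hμt (t, y) hq) y (haS (t, y) hq)
    have h2 : -θ ≤ ptd u (t, y) + aHess (a (t, y)) u (t, y) := hlow (t, y) hq
    have : -cc < -θ := by rw [hcc]; linarith
    linarith
  · -- boundary
    rintro ⟨t, y⟩ ⟨hqcl, hqnot⟩
    rw [mem_closure_cyl r hr] at hqcl
    obtain ⟨⟨ht0, ht1⟩, hy⟩ := hqcl
    simp only [cyl, Set.mem_setOf_eq, Set.mem_Ico, not_and, not_lt] at hqnot
    have hsq : (fun z : ℝ => (z^2 : ℝ) ^ (γ/2)) = fun z => if 0 ≤ z then z ^ γ else (z^2)^(γ/2) := by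
      funext z
      by_cases hz : 0 ≤ z
      · simp only [hz, if_true]
        rw [← Real.rpow_natCast z 2, ← Real.rpow_mul hz]
        congr 1; push_cast; ring
      · simp [hz]
    by_cases hteq : t = r^2
    · -- terminal boundary
      subst hteq
      have hub : u (r^2, y) ≤ M * ‖y‖ ^ γ := le_trans (le_abs_self _) (hbdry y hy)
      have hBB : barr K μ cc γ r (r^2, y) = K * ‖y‖ ^ γ := by
        rw [barr, FF]
        simp only [sub_self, mul_zero, add_zero, zero_add]
        rw [nq_eq_norm_sq]
        congr 1
        rw [← Real.rpow_natCast ‖y‖ 2, ← Real.rpow_mul (norm_nonneg y)]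
        congr 1; push_cast; ring
      rw [hBB]
      refine le_trans hub (mul_le_mul_of_nonneg_right ?_ (Real.rpow_nonneg (norm_nonneg y) γ))
      rw [hK]
      have : (0:ℝ) ≤ r ^ (-γ) * S := mul_nonneg (Real.rpow_nonneg hr.le _) hS
      linarith
    · -- lateral boundary
      have htlt : t < r^2 := lt_of_le_of_ne ht1 hteq
      have hyr : ‖y‖ = r := le_antisymm hy (hqnot ⟨ht0, htlt⟩)
      have hub : u (t, y) ≤ S := le_trans (le_abs_self _) (hSbd (t, y) (by
        rw [mem_closure_cyl r hr]; exact ⟨⟨ht0, ht1⟩, hy⟩))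
      have hrγ : (r^2 : ℝ) ^ (γ/2) = r ^ γ := by
        rw [← Real.rpow_natCast r 2, ← Real.rpow_mul hr.le]
        congr 1; push_cast; ring
      have hFFge : (r^2 : ℝ) ≤ FF μ r (t, y) := by
        rw [FF, nq_eq_norm_sq, hyr]
        have : 0 ≤ μ * (r^2 - t) := mul_nonneg hμ0.le (by linarith)
        simp only
        linarith
      have hS' : S ≤ K * r ^ γ := by
        have hrγpos : 0 < r ^ γ := Real.rpow_pos_of_pos hr γ
        have hinv : r ^ (-γ) * r ^ γ = 1 := by
          rw [Real.rpow_neg hr.le]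
          exact inv_mul_cancel₀ (ne_of_gt hrγpos)
        rw [hK, add_mul]
        have h1 : S = r ^ (-γ) * S * r ^ γ := by
          rw [mul_comm (r ^ (-γ)) S, mul_assoc, hinv, mul_one]
        have h2 : 0 ≤ M * r ^ γ := mul_nonneg hM hrγpos.le
        linarith [h1]
      calc u (t, y) ≤ S := hub
        _ ≤ K * r ^ γ := hS'
        _ = K * (r^2 : ℝ) ^ (γ/2) := by rw [hrγ]
        _ ≤ K * (FF μ r (t, y)) ^ (γ/2) := by
            refine mul_le_mul_of_nonneg_left ?_ hK0
            exact Real.rpow_le_rpow (by positivity) hFFge (by positivity)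
        _ ≤ barr K μ cc γ r (t, y) := by
            rw [barr]
            have hccn : 0 ≤ cc * (r^2 - t) := mul_nonneg (by rw [hcc]; linarith) (by linarith)
            exact le_add_of_nonneg_right hccn

end Main

theorem statement5' (d : ℕ) (hd : 1 ≤ d) (δ : ℝ) (hδ : δ ∈ Set.Ioc (0 : ℝ) 1)
    (γ : ℝ) (hγ : γ ∈ Set.Ioc (0 : ℝ) 2) :
    ∃ N : ℝ, 0 < N ∧
      ∀ (r M θ S : ℝ), 0 < r → 0 ≤ M → 0 ≤ θ →
        ∀ v : ℝ × ES d → ℝ, IsC12 (cyl d r) v → ContinuousOn v (closure (cyl d r)) →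
          (∀ x : ES d, ‖x‖ ≤ r → |v (r ^ 2, x)| ≤ M * ‖x‖ ^ γ) →
          ∀ a : ℝ × ES d → Matrix (Fin d) (Fin d) ℝ,
            (∀ q ∈ cyl d r, a q ∈ Sdelta d δ) →
            (∀ q ∈ cyl d r, |ptd v q + aHess (a q) v q| ≤ θ) →
            (∀ q ∈ cyl d r, |v q| ≤ S) →
            ∀ t ∈ Set.Icc (0 : ℝ) (r ^ 2),
              |v (t, (0 : ES d))| ≤
                N * (M + r ^ (-γ) * S) * (r ^ 2 - t) ^ (γ / 2) + θ * (r ^ 2 - t) := by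
  obtain ⟨hδ0, hδ1⟩ := hδ
  obtain ⟨hγ0, hγ2⟩ := hγ
  have hμ0 : (0:ℝ) < 2 * d * δ⁻¹ + 1 := by positivity
  refine ⟨2 * d * δ⁻¹ + 1, hμ0, ?_⟩
  intro r M θ S hr hM hθ v hv12 hvc hbdry a haS hpde hSb t ht
  set μ : ℝ := 2 * (d:ℝ) * δ⁻¹ + 1 with hμdef
  have hS0 : 0 ≤ S :=
    le_trans (abs_nonneg _) (hSb (0, 0) ⟨⟨le_refl 0, by positivity⟩, by simpa using hr⟩)
  have hSbd' : ∀ q ∈ closure (cyl d r), |v q| ≤ S := abs_le_closure hr v hvc hSb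
  set K : ℝ := M + r ^ (-γ) * S with hKdef
  have hK0 : 0 ≤ K := by
    have : (0:ℝ) ≤ r ^ (-γ) * S := mul_nonneg (Real.rpow_nonneg hr.le _) hS0
    rw [hKdef]; linarith
  by_cases hteq : t = r ^ 2
  · -- terminal time
    subst hteq
    have h1 : |v (r ^ 2, (0:ES d))| ≤ M * ‖(0:ES d)‖ ^ γ := hbdry 0 (by simpa using hr.le)
    have h2 : M * ‖(0:ES d)‖ ^ γ = 0 := by
      rw [norm_zero, Real.zero_rpow (ne_of_gt hγ0), mul_zero]
    have h3 : ((r^2 : ℝ) - r^2) = 0 := sub_self _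
    rw [h3, Real.zero_rpow (by positivity : γ/2 ≠ 0), mul_zero, mul_zero, add_zero]
    linarith
  · have htlt : t < r ^ 2 := lt_of_le_of_ne ht.2 hteq
    have hrt : 0 < r ^ 2 - t := by linarith
    have hmem : (t, (0:ES d)) ∈ closure (cyl d r) :=
      subset_closure ⟨⟨ht.1, htlt⟩, by simpa using hr⟩
    by_contra hcon
    push_neg at hcon
    set C : ℝ := μ * K * (r ^ 2 - t) ^ (γ / 2) + θ * (r ^ 2 - t) with hC
    set A : ℝ := |v (t, (0:ES d))| with hA
    have hcon' : C < A := hcon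
    set ε : ℝ := (A - C) / 2 with hε
    have hε0 : 0 < ε := div_pos (sub_pos.2 hcon') two_pos
    set εB : ℝ := ε / (r ^ 2 - t) with hεBdef
    have hεB0 : 0 < εB := div_pos hε0 hrt
    -- upper bound
    have hlow : ∀ q ∈ cyl d r, -θ ≤ ptd v q + aHess (a q) v q :=
      fun q hq => (abs_le.1 (hpde q hq)).1
    have hup := one_side ⟨hδ0, hδ1⟩ ⟨hγ0, hγ2⟩ hr hM hθ hS0 hεB0 v hv12 hvc hbdry a haS hlow
      hSbd' (t, 0) hmem
    -- lower bound via -v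
    have hbdryn : ∀ x : ES d, ‖x‖ ≤ r → |(fun q => -v q) (r ^ 2, x)| ≤ M * ‖x‖ ^ γ := by
      intro x hx; rw [abs_neg]; exact hbdry x hx
    have hlown : ∀ q ∈ cyl d r, -θ ≤ ptd (fun p => -v p) q + aHess (a q) (fun p => -v p) q := by
      intro q hq
      rw [ptd_neg, aHess_neg]
      have := (abs_le.1 (hpde q hq)).2
      linarith
    have hSbdn : ∀ q ∈ closure (cyl d r), |(fun p => -v p) q| ≤ S := by
      intro q hq; rw [abs_neg]; exact hSbd' q hq
    have hdn := one_side ⟨hδ0, hδ1⟩ ⟨hγ0, hγ2⟩ hr hM hθ hS0 hεB0 (fun p => -v p)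
      (IsC12_neg hv12) hvc.neg hbdryn a haS hlown hSbdn (t, 0) hmem
    -- combine
    have habs : A ≤ barr K μ (θ + εB) γ r (t, (0:ES d)) := by
      rw [hA]
      refine abs_le.2 ⟨?_, hup⟩
      linarith
    have hbv : barr K μ (θ + εB) γ r (t, (0:ES d))
        = K * (μ * (r ^ 2 - t)) ^ (γ / 2) + (θ + εB) * (r ^ 2 - t) := by
      rw [barr, FF]
      have : nq (0 : ES d) = 0 := by simp [nq]
      simp only [this, add_zero]
    have hmulr : (μ * (r ^ 2 - t)) ^ (γ / 2) = μ ^ (γ / 2) * (r ^ 2 - t) ^ (γ / 2) :=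
      Real.mul_rpow hμ0.le hrt.le
    have hμle : μ ^ (γ / 2) ≤ μ := by
      have h1 : (1:ℝ) ≤ μ := by
        rw [hμdef]
        have : (0:ℝ) ≤ 2 * (d:ℝ) * δ⁻¹ := by positivity
        linarith
      calc μ ^ (γ / 2) ≤ μ ^ (1:ℝ) :=
            Real.rpow_le_rpow_of_exponent_le h1 (by linarith)
        _ = μ := Real.rpow_one μ
    have hXpos : 0 ≤ (r ^ 2 - t) ^ (γ / 2) := Real.rpow_nonneg hrt.le _
    have hmain : K * (μ * (r ^ 2 - t)) ^ (γ / 2) ≤ μ * K * (r ^ 2 - t) ^ (γ / 2) := by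
      rw [hmulr]
      have := mul_le_mul_of_nonneg_right hμle hXpos
      nlinarith [mul_le_mul_of_nonneg_left this hK0]
    have hεfin : εB * (r ^ 2 - t) = ε := by
      rw [hεBdef, div_mul_cancel₀ _ (ne_of_gt hrt)]
    rw [hbv] at habs
    have h4 : (θ + εB) * (r ^ 2 - t) = θ * (r ^ 2 - t) + ε := by
      rw [add_mul, hεfin]
    have hfin : A ≤ C + ε := by
      rw [hC]
      linarith
    rw [hε] at hfin
    linarith

/-- pointwise decay estimate on the axis of the cylinder. -/
theorem statement5 (d : ℕ) (hd : 1 ≤ d) (δ : ℝ) (hδ : δ ∈ Set.Ioc (0 : ℝ) 1)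
    (γ : ℝ) (hγ : γ ∈ Set.Ioc (0 : ℝ) 2) :
    ∃ N : ℝ, 0 < N ∧
      ∀ (r M θ S : ℝ), 0 < r → 0 ≤ M → 0 ≤ θ →
        ∀ v : ℝ × ES d → ℝ, IsC12 (cyl d r) v → ContinuousOn v (closure (cyl d r)) →
          (∀ x : ES d, ‖x‖ ≤ r → |v (r ^ 2, x)| ≤ M * ‖x‖ ^ γ) →
          ∀ a : ℝ × ES d → Matrix (Fin d) (Fin d) ℝ,
            (∀ q ∈ cyl d r, a q ∈ Sdelta d δ) →
            (∀ q ∈ cyl d r, |ptd v q + aHess (a q) v q| ≤ θ) →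
            (∀ q ∈ cyl d r, |v q| ≤ S) →
            ∀ t ∈ Set.Icc (0 : ℝ) (r ^ 2),
              |v (t, (0 : ES d))| ≤
                N * (M + r ^ (-γ) * S) * (r ^ 2 - t) ^ (γ / 2) + θ * (r ^ 2 - t) := by
  exact statement5' d hd δ hδ γ hγ

end Krylov
end
end

section
/- Let d ≥ 1, r₀ ∈ (0,∞), κ ∈ (1,2), N₀ ∈ [0,∞), and let φ ∈ C^κ(C_{r₀}). Assume that for every (t,x) ∈ C_{r₀} and every r ∈ (0,2r₀] there exists an affine function φ̂ = φ̂(x) of x alone such that sup_{C_r(t,x) ∩ C_{r₀}} |φ − φ̂| ≤ N₀ r^κ. Then [φ]_{C^κ(C_{r₀})} ≤ N N₀, where N depends only on d and κ. -/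
open Set MeasureTheory

noncomputable section

namespace Krylov

attribute [local instance] Matrix.normedAddCommGroup Matrix.normedSpace

lemma affine_slope_bound {d : ℕ} (b : ES d →L[ℝ] ℝ) (c : ℝ) (x₀ : ES d) {ρ ε : ℝ}
    (hρ : 0 < ρ) (h : ∀ y : ES d, ‖y - x₀‖ < ρ → |c + b y| ≤ ε) : ‖b‖ ≤ 2 * ε / ρ := by
  have hε : 0 ≤ ε := le_trans (abs_nonneg _) (h x₀ (by simpa using hρ))
  refine ContinuousLinearMap.opNorm_le_bound _ (by positivity) fun v => ?_
  rcases eq_or_ne v 0 with rfl | hv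
  · simp
  have hnv : 0 < ‖v‖ := norm_pos_iff.2 hv
  set u : ES d := (ρ / (2 * ‖v‖)) • v with hu
  have hun : ‖u‖ = ρ / 2 := by
    rw [hu, norm_smul, Real.norm_eq_abs, abs_of_pos (by positivity)]
    field_simp
  have h1 := h (x₀ + u) (by simpa [hun] using half_lt_self hρ)
  have h2 := h (x₀ - u) (by simpa [hun, norm_neg] using half_lt_self hρ)
  have hdiff : b (x₀ + u) - b (x₀ - u) = (ρ / ‖v‖) * b v := by
    rw [map_add, map_sub, hu, ContinuousLinearMap.map_smul, smul_eq_mul]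
    field_simp
    ring
  have habs : |(ρ / ‖v‖) * b v| ≤ 2 * ε := by
    rw [← hdiff]
    calc |b (x₀ + u) - b (x₀ - u)|
        = |(c + b (x₀ + u)) - (c + b (x₀ - u))| := by ring_nf
      _ ≤ |c + b (x₀ + u)| + |c + b (x₀ - u)| := abs_sub _ _
      _ ≤ 2 * ε := by linarith
  rw [abs_mul, abs_of_pos (by positivity)] at habs
  rw [div_mul_eq_mul_div, le_div_iff₀ hρ]
  calc ‖b v‖ * ρ = (ρ / ‖v‖) * |b v| * ‖v‖ := by
        rw [Real.norm_eq_abs]; field_simp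
    _ ≤ 2 * ε * ‖v‖ := by
        apply mul_le_mul_of_nonneg_right habs (norm_nonneg v)


lemma slope_compare {d : ℕ} (φt : ES d → ℝ) {r₀ : ℝ} (hr₀ : 0 < r₀) {x : ES d} (hx : ‖x‖ < r₀)
    {ρ : ℝ} (hρ : 0 < ρ) (hρ2 : ρ ≤ 2 * r₀)
    {c₁ c₂ : ℝ} {b₁ b₂ : ES d →L[ℝ] ℝ} {ε₁ ε₂ : ℝ}
    (h₁ : ∀ y : ES d, ‖y - x‖ < ρ → ‖y‖ < r₀ → |φt y - (c₁ + b₁ y)| ≤ ε₁)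
    (h₂ : ∀ y : ES d, ‖y - x‖ < ρ → ‖y‖ < r₀ → |φt y - (c₂ + b₂ y)| ≤ ε₂) :
    ‖b₁ - b₂‖ ≤ 4 * (ε₁ + ε₂) / ρ := by
  set θ : ℝ := ρ / (2 * r₀) with hθ
  have hθ0 : 0 < θ := by positivity
  have hθ1 : θ ≤ 1 := by rw [hθ, div_le_one (by positivity)]; linarith
  set x' : ES d := (1 - θ) • x with hx'
  have key : ∀ y : ES d, ‖y - x'‖ < ρ / 2 → ‖y - x‖ < ρ ∧ ‖y‖ < r₀ := by
    intro y hy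
    have hxx' : ‖x' - x‖ = θ * ‖x‖ := by
      rw [hx', show (1 - θ) • x - x = (-θ) • x by module, norm_smul, Real.norm_eq_abs,
        abs_neg, abs_of_pos hθ0]
    have hθr : θ * r₀ = ρ / 2 := by rw [hθ]; field_simp
    have h1 : ‖y - x‖ < ρ := by
      calc ‖y - x‖ ≤ ‖y - x'‖ + ‖x' - x‖ := norm_sub_le_norm_sub_add_norm_sub y x' x
        _ < ρ / 2 + θ * r₀ := by
            have : θ * ‖x‖ < θ * r₀ := by exact mul_lt_mul_of_pos_left hx hθ0
            rw [hxx'] at *; linarith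
        _ = ρ := by rw [hθr]; ring
    refine ⟨h1, ?_⟩
    have hx'n : ‖x'‖ ≤ (1 - θ) * r₀ := by
      rw [hx', norm_smul, Real.norm_eq_abs, abs_of_nonneg (by linarith)]
      exact mul_le_mul_of_nonneg_left hx.le (by linarith)
    calc ‖y‖ = ‖(y - x') + x'‖ := by rw [sub_add_cancel]
      _ ≤ ‖y - x'‖ + ‖x'‖ := norm_add_le _ _
      _ < ρ / 2 + (1 - θ) * r₀ := by linarith
      _ = r₀ := by rw [hθ]; field_simp; ring
  have hsmall : ∀ y : ES d, ‖y - x'‖ < ρ / 2 → |(c₁ - c₂) + (b₁ - b₂) y| ≤ ε₁ + ε₂ := by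
    intro y hy
    obtain ⟨hy1, hy2⟩ := key y hy
    have e1 := h₁ y hy1 hy2
    have e2 := h₂ y hy1 hy2
    have heq : (c₁ - c₂) + (b₁ - b₂) y = (φt y - (c₂ + b₂ y)) - (φt y - (c₁ + b₁ y)) := by
      simp [ContinuousLinearMap.sub_apply]; ring
    rw [heq]
    calc |(φt y - (c₂ + b₂ y)) - (φt y - (c₁ + b₁ y))|
        ≤ |φt y - (c₂ + b₂ y)| + |φt y - (c₁ + b₁ y)| := abs_sub _ _
      _ ≤ ε₁ + ε₂ := by linarith
  have hb := affine_slope_bound (b₁ - b₂) (c₁ - c₂) x' (half_pos hρ) hsmall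
  calc ‖b₁ - b₂‖ ≤ 2 * (ε₁ + ε₂) / (ρ / 2) := hb
    _ = 4 * (ε₁ + ε₂) / ρ := by field_simp; ring


lemma rpow_div_pow {ρ : ℝ} (hρ : 0 < ρ) (κ : ℝ) (i : ℕ) :
    (ρ / 2 ^ i) ^ (κ - 1) = ρ ^ (κ - 1) * ((2:ℝ) ^ (1 - κ)) ^ i := by
  rw [Real.div_rpow hρ.le (by positivity),
    show ((2:ℝ) ^ i) = (2:ℝ) ^ (i:ℝ) from (Real.rpow_natCast 2 i).symm,
    ← Real.rpow_natCast ((2:ℝ) ^ (1 - κ)) i,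
    ← Real.rpow_mul (by norm_num), ← Real.rpow_mul (by norm_num),
    div_eq_mul_inv, ← Real.rpow_neg (by norm_num)]
  ring_nf

/-- The gradient is well approximated by the slope of any affine approximation. -/
lemma grad_approx {d : ℕ} {κ r₀ N₀ : ℝ} (hκ1 : 1 < κ) (hκ2 : κ < 2)
    (hr₀ : 0 < r₀) (hN₀ : 0 ≤ N₀) (φ : ℝ × ES d → ℝ)
    (hdiff : ∀ q ∈ cyl d r₀, DifferentiableAt ℝ (fun y => φ (q.1, y)) q.2)
    (c : ℝ × ES d → ℝ → ℝ) (b : ℝ × ES d → ℝ → (ES d →L[ℝ] ℝ))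
    (hA : ∀ t x, (t,x) ∈ cyl d r₀ → ∀ r, 0 < r → r ≤ 2*r₀ →
       ∀ y : ES d, ‖y - x‖ < r → ‖y‖ < r₀ → |φ (t,y) - (c (t,x) r + b (t,x) r y)| ≤ N₀ * r ^ κ)
    {t : ℝ} {x : ES d} (hz : (t,x) ∈ cyl d r₀) {ρ : ℝ} (hρ : 0 < ρ) (hρr : ρ ≤ r₀) :
    ‖Dsp φ (t,x) - b (t,x) ρ‖ ≤ (16 / (1 - 2^(1-κ))) * N₀ * ρ^(κ-1) := by
  have hx : ‖x‖ < r₀ := hz.2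
  set s : ℝ := (2:ℝ) ^ (1 - κ) with hs
  have hs0 : 0 < s := Real.rpow_pos_of_pos two_pos _
  have hs1 : s < 1 := Real.rpow_lt_one_of_one_lt_of_neg one_lt_two (by linarith)
  have hρi : ∀ i : ℕ, 0 < ρ / 2 ^ i := fun i => by positivity
  have hρi2 : ∀ i : ℕ, ρ / 2 ^ i ≤ 2 * r₀ := by
    intro i
    have h21 : (1:ℝ) ≤ 2 ^ i := one_le_pow₀ one_le_two
    calc ρ / 2 ^ i ≤ ρ := div_le_self hρ.le h21
      _ ≤ 2 * r₀ := by linarith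
  set B : ℕ → (ES d →L[ℝ] ℝ) := fun i => b (t,x) (ρ / 2 ^ i) with hB
  -- step estimate
  have step : ∀ i : ℕ, ‖B i - B (i+1)‖ ≤ 16 * N₀ * (ρ / 2 ^ i) ^ (κ - 1) := by
    intro i
    have h2 : (ρ / 2 ^ (i+1)) = (ρ / 2 ^ i) / 2 := by rw [pow_succ]; ring
    have hmono : (ρ / 2 ^ (i+1) : ℝ) ^ κ ≤ (ρ / 2 ^ i) ^ κ :=
      Real.rpow_le_rpow (hρi (i+1)).le (by rw [h2]; linarith [half_lt_self (hρi i)])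
        (by linarith)
    have hsc := slope_compare (fun y => φ (t, y)) hr₀ hx (hρi (i+1)) (hρi2 (i+1))
      (c₁ := c (t,x) (ρ / 2 ^ i)) (b₁ := B i) (c₂ := c (t,x) (ρ / 2 ^ (i+1))) (b₂ := B (i+1))
      (ε₁ := N₀ * (ρ / 2 ^ i) ^ κ) (ε₂ := N₀ * (ρ / 2 ^ i) ^ κ)
      (fun y hy1 hy2 => hA t x hz _ (hρi i) (hρi2 i) y
        (lt_trans hy1 (by rw [h2]; exact half_lt_self (hρi i))) hy2)
      (fun y hy1 hy2 => le_trans (hA t x hz _ (hρi (i+1)) (hρi2 (i+1)) y hy1 hy2)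
        (mul_le_mul_of_nonneg_left hmono hN₀))
    refine le_trans hsc (le_of_eq ?_)
    have hrp : (ρ / 2 ^ i) ^ κ / (ρ / 2 ^ i) = (ρ / 2 ^ i) ^ (κ - 1) := by
      rw [Real.rpow_sub_one (hρi i).ne']
    calc 4 * (N₀ * (ρ / 2 ^ i) ^ κ + N₀ * (ρ / 2 ^ i) ^ κ) / (ρ / 2 ^ (i+1))
        = 16 * N₀ * ((ρ / 2 ^ i) ^ κ / (ρ / 2 ^ i)) := by rw [h2]; field_simp; ring
      _ = 16 * N₀ * (ρ / 2 ^ i) ^ (κ - 1) := by rw [hrp]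
  -- telescoping
  have geo : ∀ i : ℕ, ∑ k ∈ Finset.range i, s ^ k ≤ (1 - s)⁻¹ := by
    intro i
    rw [geom_sum_eq hs1.ne i, show (s ^ i - 1)/(s - 1) = (1 - s ^ i)/(1 - s) by
      rw [← neg_div_neg_eq]; ring_nf]
    rw [div_eq_mul_inv]
    have : 0 ≤ s ^ i := by positivity
    nlinarith [inv_pos.2 (show (0:ℝ) < 1 - s by linarith)]
  have tele : ∀ n : ℕ, ‖B 0 - B n‖ ≤ (16 / (1 - s)) * N₀ * ρ ^ (κ - 1) := by
    intro n
    have hd := dist_le_range_sum_dist B n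
    rw [dist_eq_norm] at hd
    refine le_trans hd ?_
    have : ∀ k ∈ Finset.range n, dist (B k) (B (k+1)) ≤
        (16 * N₀ * ρ ^ (κ-1)) * s ^ k := by
      intro k _
      rw [dist_eq_norm]
      refine le_trans (step k) (le_of_eq ?_)
      rw [rpow_div_pow hρ κ k]; ring
    refine le_trans (Finset.sum_le_sum this) ?_
    rw [← Finset.mul_sum]
    calc (16 * N₀ * ρ ^ (κ-1)) * ∑ k ∈ Finset.range n, s ^ k
        ≤ (16 * N₀ * ρ ^ (κ-1)) * (1 - s)⁻¹ := by
          apply mul_le_mul_of_nonneg_left (geo n) (by positivity)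
      _ = (16 / (1 - s)) * N₀ * ρ ^ (κ - 1) := by field_simp; try ring
  -- limit
  refine le_of_forall_pos_le_add fun ε hε => ?_
  have hder : HasFDerivAt (fun y => φ (t, y)) (Dsp φ (t,x)) x := by
    have := (hdiff (t,x) hz).hasFDerivAt
    exact this
  have hlo := hder.isLittleO
  have hη : (0:ℝ) < ε / 16 := by positivity
  obtain ⟨δ, hδ0, hδ⟩ := Metric.eventually_nhds_iff.1 (hlo.bound hη)
  -- pick n
  have T1 : Filter.Tendsto (fun n : ℕ => ρ / 2 ^ n) Filter.atTop (nhds 0) := by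
    have : (fun n : ℕ => ρ / 2 ^ n) = fun n : ℕ => ρ * (1/2 : ℝ) ^ n := by
      funext n; rw [div_pow, one_pow]; ring
    rw [this, show (0:ℝ) = ρ * 0 by ring]
    exact (tendsto_pow_atTop_nhds_zero_of_lt_one (by norm_num) (by norm_num)).const_mul ρ
  have T2 : Filter.Tendsto (fun n : ℕ => 4 * N₀ * (ρ / 2 ^ n) ^ (κ - 1)) Filter.atTop (nhds 0) := by
    have heq : (fun n : ℕ => 4 * N₀ * (ρ / 2 ^ n) ^ (κ - 1))
        = fun n : ℕ => (4 * N₀ * ρ ^ (κ-1)) * s ^ n := by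
      funext n; rw [rpow_div_pow hρ κ n]; ring
    rw [heq, show (0:ℝ) = (4 * N₀ * ρ ^ (κ-1)) * 0 by ring]
    exact (tendsto_pow_atTop_nhds_zero_of_lt_one hs0.le hs1).const_mul _
  obtain ⟨n, hn1, hn2⟩ :=
    ((T1.eventually (gt_mem_nhds hδ0)).and
      (T2.eventually (ge_mem_nhds (show (0:ℝ) < ε/2 by positivity)))).exists
  -- estimate ‖Dsp - B n‖
  have hDn : ‖B n - Dsp φ (t,x)‖ ≤ 4 * N₀ * (ρ / 2 ^ n) ^ (κ-1) + 4 * (ε/16) := by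
    have hsc := slope_compare (fun y => φ (t, y)) hr₀ hx (hρi n) (hρi2 n)
      (c₁ := c (t,x) (ρ / 2 ^ n)) (b₁ := B n)
      (c₂ := φ (t,x) - Dsp φ (t,x) x) (b₂ := Dsp φ (t,x))
      (ε₁ := N₀ * (ρ / 2 ^ n) ^ κ) (ε₂ := (ε/16) * (ρ / 2 ^ n))
      (fun y hy1 hy2 => hA t x hz _ (hρi n) (hρi2 n) y hy1 hy2)
      (fun y hy1 hy2 => ?_)
    · refine le_trans hsc (le_of_eq ?_)
      have hrp : (ρ / 2 ^ n) ^ κ / (ρ / 2 ^ n) = (ρ / 2 ^ n) ^ (κ - 1) := by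
        rw [Real.rpow_sub_one (hρi n).ne']
      calc 4 * (N₀ * (ρ / 2 ^ n) ^ κ + (ε/16) * (ρ / 2 ^ n)) / (ρ / 2 ^ n)
          = 4 * N₀ * ((ρ / 2 ^ n) ^ κ / (ρ / 2 ^ n)) + 4 * (ε/16) := by
            field_simp
        _ = 4 * N₀ * (ρ / 2 ^ n) ^ (κ-1) + 4 * (ε/16) := by rw [hrp]
    · -- the derivative estimate
      have hyd : dist y x < δ := by
        rw [dist_eq_norm]; exact lt_trans hy1 hn1
      have := hδ hyd
      simp only [Real.norm_eq_abs] at this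
      have heq : φ (t, y) - (φ (t,x) - Dsp φ (t,x) x + Dsp φ (t,x) y)
          = φ (t, y) - φ (t, x) - Dsp φ (t,x) (y - x) := by
        rw [map_sub]; ring
      rw [heq]
      calc |φ (t, y) - φ (t, x) - (Dsp φ (t,x)) (y - x)| ≤ ε/16 * ‖y - x‖ := this
        _ ≤ ε/16 * (ρ / 2 ^ n) := by
          apply mul_le_mul_of_nonneg_left hy1.le (by positivity)
  -- combine
  have hB0 : b (t,x) ρ = B 0 := by rw [hB]; norm_num
  rw [hB0]
  calc ‖Dsp φ (t,x) - B 0‖ ≤ ‖B 0 - B n‖ + ‖B n - Dsp φ (t,x)‖ := by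
        rw [norm_sub_rev (Dsp φ (t,x)) (B 0)]
        exact norm_sub_le_norm_sub_add_norm_sub _ _ _
    _ ≤ (16 / (1 - s)) * N₀ * ρ ^ (κ - 1) + (4 * N₀ * (ρ / 2 ^ n) ^ (κ-1) + 4 * (ε/16)) :=
        add_le_add (tele n) hDn
    _ ≤ (16 / (1 - s)) * N₀ * ρ ^ (κ - 1) + ε := by
        have : 4 * N₀ * (ρ / 2 ^ n) ^ (κ-1) ≤ ε / 2 := hn2
        linarith

set_option maxHeartbeats 1000000 in
/-- characterization of `C^κ` functions via affine approximation. -/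
theorem statement12 (d : ℕ) (hd : 1 ≤ d) (κ : ℝ) (hκ : κ ∈ Set.Ioo (1 : ℝ) 2) :
    ∃ N : ℝ, 0 < N ∧
      ∀ (r₀ N₀ : ℝ), 0 < r₀ → 0 ≤ N₀ →
        ∀ φ : ℝ × ES d → ℝ, MemCk κ (cyl d r₀) φ →
          (∀ z ∈ cyl d r₀, ∀ r ∈ Set.Ioc (0 : ℝ) (2 * r₀),
            ∃ (c : ℝ) (b : ES d →L[ℝ] ℝ),
              ∀ q ∈ cylAt z r ∩ cyl d r₀, |φ q - (c + b q.2)| ≤ N₀ * r ^ κ) →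
          HSemiLE κ (cyl d r₀) φ (N * N₀) := by
  obtain ⟨hκ1, hκ2⟩ := hκ
  have hs0 : (0:ℝ) < 2 ^ (1 - κ) := Real.rpow_pos_of_pos two_pos _
  have hs1 : (2:ℝ) ^ (1 - κ) < 1 :=
    Real.rpow_lt_one_of_one_lt_of_neg one_lt_two (by linarith)
  have hC0 : (0:ℝ) < 16 / (1 - 2 ^ (1 - κ)) := by
    apply div_pos (by norm_num); linarith
  refine ⟨2 * (16 / (1 - 2 ^ (1-κ))) + 44, by linarith, ?_⟩
  intro r₀ N₀ hr₀ hN₀ φ hφ H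
  choose! c b hcb using H
  have hA : ∀ t x, (t,x) ∈ cyl d r₀ → ∀ r, 0 < r → r ≤ 2*r₀ →
      ∀ y : ES d, ‖y - x‖ < r → ‖y‖ < r₀ →
        |φ (t,y) - (c (t,x) r + b (t,x) r y)| ≤ N₀ * r ^ κ := by
    intro t x hzc r hr hr2 y h1 h2
    have hmem : (t,y) ∈ cylAt (t,x) r ∩ cyl d r₀ := by
      refine ⟨⟨?_, by simpa using h1⟩, hzc.1, h2⟩
      simp only [sub_self, Set.mem_Ico, le_refl, true_and]
      positivity
    exact hcb (t,x) hzc r ⟨hr, hr2⟩ (t,y) hmem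
  constructor
  · -- time regularity
    have timekey : ∀ t u : ℝ, ∀ x : ES d, (t,x) ∈ cyl d r₀ → (u,x) ∈ cyl d r₀ → u < t →
        |φ (t,x) - φ (u,x)| ≤ 4 * N₀ * (t - u) ^ (κ/2) := by
      intro t u x h1 h2 hut
      have hτ0 : 0 < t - u := by linarith
      set r := Real.sqrt (2*(t-u)) with hrdef
      have hr0 : 0 < r := Real.sqrt_pos.2 (by linarith)
      have hr2 : r^2 = 2*(t-u) := Real.sq_sqrt (by linarith)
      have hrle : r ≤ 2*r₀ := by
        have ht1 : t < r₀^2 := h1.1.2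
        have hu0 : 0 ≤ u := h2.1.1
        nlinarith [hr0, hr₀]
      have m1 : (t,x) ∈ cylAt (u,x) r ∩ cyl d r₀ := by
        refine ⟨⟨?_, by simpa using hr0⟩, h1⟩
        show t - u ∈ Set.Ico (0:ℝ) (r^2)
        rw [hr2]
        exact ⟨by linarith, by linarith⟩
      have m2 : (u,x) ∈ cylAt (u,x) r ∩ cyl d r₀ := by
        refine ⟨⟨?_, by simpa using hr0⟩, h2⟩
        show u - u ∈ Set.Ico (0:ℝ) (r^2)
        rw [hr2, sub_self]
        exact ⟨le_refl _, by linarith⟩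
      have e1 := hcb (u,x) h2 r ⟨hr0, hrle⟩ (t,x) m1
      have e2 := hcb (u,x) h2 r ⟨hr0, hrle⟩ (u,x) m2
      have hsum : |φ (t,x) - φ (u,x)| ≤ 2 * (N₀ * r ^ κ) := by
        have heq : φ (t,x) - φ (u,x) =
            (φ (t,x) - (c (u,x) r + b (u,x) r x)) - (φ (u,x) - (c (u,x) r + b (u,x) r x)) := by
          ring
        rw [heq]
        calc |(φ (t,x) - (c (u,x) r + b (u,x) r x)) - (φ (u,x) - (c (u,x) r + b (u,x) r x))|
            ≤ |φ (t,x) - (c (u,x) r + b (u,x) r x)| + |φ (u,x) - (c (u,x) r + b (u,x) r x)| :=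
              abs_sub _ _
          _ ≤ 2 * (N₀ * r ^ κ) := by
              have e1' : |φ (t,x) - (c (u,x) r + b (u,x) r x)| ≤ N₀ * r ^ κ := e1
              have e2' : |φ (u,x) - (c (u,x) r + b (u,x) r x)| ≤ N₀ * r ^ κ := e2
              linarith
      have hrκ : r ^ κ = (2*(t-u)) ^ (κ/2) := by
        rw [hrdef, Real.sqrt_eq_rpow, ← Real.rpow_mul (by linarith)]
        ring_nf
      have h2κ : (2*(t-u))^(κ/2) ≤ 2 * (t-u)^(κ/2) := by
        rw [Real.mul_rpow (by norm_num) hτ0.le]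
        have h22 : (2:ℝ)^(κ/2) ≤ 2 := by
          calc (2:ℝ)^(κ/2) ≤ 2^(1:ℝ) :=
                Real.rpow_le_rpow_of_exponent_le one_le_two (by linarith)
            _ = 2 := Real.rpow_one 2
        exact mul_le_mul_of_nonneg_right h22 (Real.rpow_nonneg hτ0.le _)
      calc |φ (t,x) - φ (u,x)| ≤ 2*(N₀ * r^κ) := hsum
        _ = 2*N₀*(2*(t-u))^(κ/2) := by rw [hrκ]; ring
        _ ≤ 4*N₀*(t-u)^(κ/2) := by nlinarith [Real.rpow_nonneg hτ0.le (κ/2)]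
    intro t u x h1 h2
    rcases lt_trichotomy u t with h | h | h
    · have hk := timekey t u x h1 h2 h
      have habs : |t - u| = t - u := abs_of_pos (by linarith)
      rw [habs]
      have hrn : (0:ℝ) ≤ (t-u)^(κ/2) := Real.rpow_nonneg (by linarith) _
      nlinarith [mul_nonneg hN₀ hrn, mul_nonneg (mul_nonneg hC0.le hN₀) hrn]
    · subst h
      simp [Real.zero_rpow (by positivity : κ/2 ≠ 0)]
    · have hk := timekey u t x h2 h1 h
      have habs : |t - u| = u - t := by rw [abs_sub_comm]; exact abs_of_pos (by linarith)
      rw [abs_sub_comm, habs]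
      have hrn : (0:ℝ) ≤ (u-t)^(κ/2) := Real.rpow_nonneg (by linarith) _
      nlinarith [mul_nonneg hN₀ hrn, mul_nonneg (mul_nonneg hC0.le hN₀) hrn]
  · -- spatial regularity of the gradient
    intro t x y h1 h2
    rcases eq_or_ne x y with rfl | hxy
    · simp [Real.zero_rpow (by intro h; linarith : κ - 1 ≠ 0)]
    have hr0 : (0:ℝ) < ‖x - y‖ := norm_pos_iff.2 (sub_ne_zero.2 hxy)
    set r : ℝ := ‖x - y‖ with hrd
    set ρ : ℝ := min r r₀ with hρd
    have hρ0 : 0 < ρ := lt_min hr0 hr₀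
    have hρr : ρ ≤ r₀ := min_le_right _ _
    have hρle : ρ ≤ r := min_le_left _ _
    have hrlt : r < 2 * r₀ := by
      calc r ≤ ‖x‖ + ‖y‖ := norm_sub_le x y
        _ < 2 * r₀ := by have := h1.2; have := h2.2; linarith
    have hhalf : r / 2 < ρ := lt_min (half_lt_self hr0) (by linarith)
    set m : ES d := (2:ℝ)⁻¹ • (x + y) with hmd
    have hxm : ‖x - m‖ = r / 2 := by
      rw [hmd, show x - (2:ℝ)⁻¹ • (x + y) = (2:ℝ)⁻¹ • (x - y) by module, norm_smul]
      simp [Real.norm_eq_abs]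
      rw [← hrd]; ring
    have hym : ‖y - m‖ = r / 2 := by
      rw [hmd, show y - (2:ℝ)⁻¹ • (x + y) = (2:ℝ)⁻¹ • (y - x) by module, norm_smul]
      simp [Real.norm_eq_abs]
      rw [norm_sub_rev, ← hrd]; ring
    have hmm : (t, m) ∈ cyl d r₀ := by
      refine ⟨h1.1, ?_⟩
      calc ‖m‖ ≤ (2:ℝ)⁻¹ * (‖x‖ + ‖y‖) := by
            rw [hmd, norm_smul]
            simp only [Real.norm_eq_abs, abs_of_pos (by norm_num : (0:ℝ) < (2:ℝ)⁻¹)]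
            exact mul_le_mul_of_nonneg_left (norm_add_le x y) (by norm_num)
        _ < r₀ := by have := h1.2; have := h2.2; linarith
    -- the four estimates
    have A1 := grad_approx hκ1 hκ2 hr₀ hN₀ φ hφ.1 c b hA h1 hρ0 hρr
    have A4 := grad_approx hκ1 hκ2 hr₀ hN₀ φ hφ.1 c b hA h2 hρ0 hρr
    have h2ρ0 : (0:ℝ) < 2 * ρ := by linarith
    have h2ρr : 2 * ρ ≤ 2 * r₀ := by linarith
    have A2 := slope_compare (fun y' => φ (t, y')) hr₀ h1.2 hρ0 (by linarith)
      (c₁ := c (t,x) ρ) (b₁ := b (t,x) ρ) (c₂ := c (t,m) (2*ρ)) (b₂ := b (t,m) (2*ρ))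
      (ε₁ := N₀ * ρ ^ κ) (ε₂ := N₀ * (2*ρ) ^ κ)
      (fun y' hy1 hy2 => hA t x h1 ρ hρ0 (by linarith) y' hy1 hy2)
      (fun y' hy1 hy2 => hA t m hmm (2*ρ) h2ρ0 h2ρr y' (by
        calc ‖y' - m‖ ≤ ‖y' - x‖ + ‖x - m‖ := norm_sub_le_norm_sub_add_norm_sub _ _ _
          _ < ρ + r/2 := by rw [hxm]; linarith
          _ < 2 * ρ := by linarith) hy2)
    have A3 := slope_compare (fun y' => φ (t, y')) hr₀ h2.2 hρ0 (by linarith)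
      (c₁ := c (t,y) ρ) (b₁ := b (t,y) ρ) (c₂ := c (t,m) (2*ρ)) (b₂ := b (t,m) (2*ρ))
      (ε₁ := N₀ * ρ ^ κ) (ε₂ := N₀ * (2*ρ) ^ κ)
      (fun y' hy1 hy2 => hA t y h2 ρ hρ0 (by linarith) y' hy1 hy2)
      (fun y' hy1 hy2 => hA t m hmm (2*ρ) h2ρ0 h2ρr y' (by
        calc ‖y' - m‖ ≤ ‖y' - y‖ + ‖y - m‖ := norm_sub_le_norm_sub_add_norm_sub _ _ _
          _ < ρ + r/2 := by rw [hym]; linarith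
          _ < 2 * ρ := by linarith) hy2)
    -- simplify the bound in A2/A3
    have hB : 4 * (N₀ * ρ ^ κ + N₀ * (2*ρ) ^ κ) / ρ ≤ 20 * N₀ * ρ ^ (κ-1) := by
      have h2κ : (2*ρ)^κ ≤ 4 * ρ^κ := by
        rw [Real.mul_rpow (by norm_num) hρ0.le]
        have h24 : (2:ℝ)^κ ≤ 4 := by
          calc (2:ℝ)^κ ≤ 2^(2:ℝ) := Real.rpow_le_rpow_of_exponent_le one_le_two (by linarith)
            _ = 4 := by
              rw [show (2:ℝ) = ((2:ℕ):ℝ) from by norm_num]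
              rw [Real.rpow_natCast]; norm_num
        exact mul_le_mul_of_nonneg_right h24 (Real.rpow_nonneg hρ0.le _)
      have hrp : ρ ^ κ / ρ = ρ ^ (κ - 1) := by rw [Real.rpow_sub_one hρ0.ne']
      have hρκ0 : (0:ℝ) ≤ ρ ^ κ := Real.rpow_nonneg hρ0.le _
      calc 4 * (N₀ * ρ ^ κ + N₀ * (2*ρ) ^ κ) / ρ
          ≤ 4 * (N₀ * ρ ^ κ + N₀ * (4 * ρ ^ κ)) / ρ := by
            have hnum : N₀ * (2*ρ) ^ κ ≤ N₀ * (4 * ρ ^ κ) :=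
              mul_le_mul_of_nonneg_left h2κ hN₀
            gcongr
        _ = 20 * N₀ * (ρ ^ κ / ρ) := by ring
        _ = 20 * N₀ * ρ ^ (κ-1) := by rw [hrp]
    -- combine
    have tri : ‖Dsp φ (t, x) - Dsp φ (t, y)‖ ≤
        ‖Dsp φ (t,x) - b (t,x) ρ‖ + ‖b (t,x) ρ - b (t,m) (2*ρ)‖ +
        ‖b (t,m) (2*ρ) - b (t,y) ρ‖ + ‖b (t,y) ρ - Dsp φ (t,y)‖ := by
      calc ‖Dsp φ (t, x) - Dsp φ (t, y)‖
          ≤ ‖Dsp φ (t,x) - b (t,y) ρ‖ + ‖b (t,y) ρ - Dsp φ (t,y)‖ :=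
            norm_sub_le_norm_sub_add_norm_sub _ _ _
        _ ≤ (‖Dsp φ (t,x) - b (t,m) (2*ρ)‖ + ‖b (t,m) (2*ρ) - b (t,y) ρ‖) +
            ‖b (t,y) ρ - Dsp φ (t,y)‖ := by
            gcongr ?_ + _
            exact norm_sub_le_norm_sub_add_norm_sub _ _ _
        _ ≤ (‖Dsp φ (t,x) - b (t,x) ρ‖ + ‖b (t,x) ρ - b (t,m) (2*ρ)‖ +
            ‖b (t,m) (2*ρ) - b (t,y) ρ‖) + ‖b (t,y) ρ - Dsp φ (t,y)‖ := by
            gcongr (?_ + _) + _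
            exact norm_sub_le_norm_sub_add_norm_sub _ _ _
        _ = _ := by ring
    have A3' : ‖b (t,m) (2*ρ) - b (t,y) ρ‖ ≤ 4 * (N₀ * ρ ^ κ + N₀ * (2*ρ) ^ κ) / ρ := by
      rw [norm_sub_rev]
      exact A3
    have A4' : ‖b (t,y) ρ - Dsp φ (t,y)‖ ≤ (16 / (1 - 2^(1-κ))) * N₀ * ρ^(κ-1) := by
      rw [norm_sub_rev]; exact A4
    have hmono : ρ ^ (κ-1) ≤ r ^ (κ-1) := Real.rpow_le_rpow hρ0.le hρle (by linarith)
    have hrn : (0:ℝ) ≤ ρ ^ (κ-1) := Real.rpow_nonneg hρ0.le _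
    have final : ‖Dsp φ (t, x) - Dsp φ (t, y)‖ ≤
        (2 * (16 / (1 - 2 ^ (1-κ))) + 40) * (N₀ * ρ ^ (κ-1)) := by
      have e : (2 * (16 / (1 - 2 ^ (1-κ))) + 40) * (N₀ * ρ ^ (κ-1)) =
          (16 / (1 - 2 ^ (1-κ)) * N₀ * ρ ^ (κ-1)) + (20 * N₀ * ρ ^ (κ-1)) +
          (20 * N₀ * ρ ^ (κ-1)) + (16 / (1 - 2 ^ (1-κ)) * N₀ * ρ ^ (κ-1)) := by ring
      rw [e]
      exact le_trans tri (add_le_add (add_le_add (add_le_add A1 (le_trans A2 hB))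
        (le_trans A3' hB)) A4')
    refine le_trans final ?_
    have hN0ρ : N₀ * ρ ^ (κ-1) ≤ N₀ * r ^ (κ-1) := mul_le_mul_of_nonneg_left hmono hN₀
    have hrn' : (0:ℝ) ≤ r ^ (κ-1) := Real.rpow_nonneg hr0.le _
    calc (2 * (16 / (1 - 2 ^ (1-κ))) + 40) * (N₀ * ρ ^ (κ-1))
        ≤ (2 * (16 / (1 - 2 ^ (1-κ))) + 40) * (N₀ * r ^ (κ-1)) :=
          mul_le_mul_of_nonneg_left hN0ρ (by linarith)
      _ ≤ (2 * (16 / (1 - 2 ^ (1-κ))) + 44) * N₀ * r ^ (κ-1) := by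
          nlinarith [mul_nonneg hN₀ hrn']


end Krylov
end
end
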